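/- arXiv:1509.04828 — 3 statements merged into one kernel-verified Lean document; each statement's English description precedes it below -/
import Mathlib

section
/- Equivalence of the two penalized criteria (Proposition 2.1). Let K, p ≥ 1, and for each category k = 1,…,K let l_k be the pseudo-log-likelihood of the Ising model with main effects on the n_k observations of category k. Consider (i) the two-parameter criterion F_{η1,η2}(Φ, Γ^{(1)},…,Γ^{(K)}) = Σ_{k=1}^K l_k(Θ^{(k)}) − η1 Σ_{j<j'} φ_{j,j'} − η2 Σ_{j<j'} Σ_{k=1}^K |γ^{(k)}_{j,j'}|, maximized over symmetric Φ = (φ_{j,j'}) with φ_{j,j'} ≥ 0 off-diagonal and φ_{j,j} = 1, and symmetric Γ^{(k)} = (γ^{(k)}_{j,j'}), where Θ^{(k)} = Φ · Γ^{(k)} (entrywise product); and (ii) the single-parameter criterion F_λ(Θ^{(1)},…,Θ^{(K)}) = Σ_{k=1}^K l_k(Θ^{(k)}) − λ Σ_{j<j'} √(Σ_{k=1}^K |θ^{(k)}_{j,j'}|), maximized over symmetric Θ^{(1)},…,Θ^{(K)}. Suppose η1, η2 > 0 and λ = 2√(η1 η2). Then: if (Θ̂^{(1)},…,Θ̂^{(K)})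 is a local maximizer of F_λ, there exists a local maximizer (Φ̂, Γ̂^{(1)},…,Γ̂^{(K)}) of F_{η1,η2} with Θ̂^{(k)} = Φ̂ · Γ̂^{(k)} for all k; conversely, if (Φ̂, Γ̂^{(1)},…,Γ̂^{(K)}) is a local maximizer of F_{η1,η2}, then (Φ̂ · Γ̂^{(1)},…,Φ̂ · Γ̂^{(K)}) is a local maximizer of F_λ. -/
open Filter Finset Matrix

noncomputable section

/-- Real value of a binary (0/1) observation. -/
def toR (b : Bool) : ℝ := if b then 1 else 0

/-- Index set of pairs (j,j') with j < j'. -/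
abbrev PairIdx (p : ℕ) := {q : Fin p × Fin p // q.1 < q.2}

/-- Symmetric extension of a vector indexed by pairs j < j'. -/
def symExt {p : ℕ} (θ : PairIdx p → ℝ) (j j' : Fin p) : ℝ :=
  if h : j < j' then θ ⟨(j, j'), h⟩ else if h' : j' < j then θ ⟨(j', j), h'⟩ else 0

/-- Energy of the main-effect-free Ising model. -/
def isingEnergy {p : ℕ} (θ : PairIdx p → ℝ) (x : Fin p → Bool) : ℝ :=
  ∑ e : PairIdx p, θ e * toR (x e.1.1) * toR (x e.1.2)

/-- Pmf of the main-effect-free Ising model. -/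
def isingPmf {p : ℕ} (θ : PairIdx p → ℝ) (x : Fin p → Bool) : ℝ :=
  Real.exp (isingEnergy θ x) / ∑ y : Fin p → Bool, Real.exp (isingEnergy θ y)

/-- Energy of the Ising model with main effects, parameter a symmetric matrix. -/
def isingEnergyFull {p : ℕ} (Θ : Matrix (Fin p) (Fin p) ℝ) (x : Fin p → Bool) : ℝ :=
  ∑ j, Θ j j * toR (x j) + ∑ e : PairIdx p, Θ e.1.1 e.1.2 * toR (x e.1.1) * toR (x e.1.2)

/-- Pmf of the Ising model with main effects. -/
def isingPmfFull {p : ℕ} (Θ : Matrix (Fin p) (Fin p) ℝ) (x : Fin p → Bool) : ℝ :=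
  Real.exp (isingEnergyFull Θ x) / ∑ y : Fin p → Bool, Real.exp (isingEnergyFull Θ y)

/-- Local field at node j (no main effects). -/
def localField {p : ℕ} (θ : PairIdx p → ℝ) (x : Fin p → Bool) (j : Fin p) : ℝ :=
  ∑ j' ∈ Finset.univ.erase j, symExt θ j j' * toR (x j')

/-- One-observation pseudo-log-likelihood (no main effects). -/
def pllOne {p : ℕ} (x : Fin p → Bool) (θ : PairIdx p → ℝ) : ℝ :=
  ∑ j, (toR (x j) * localField θ x j - Real.log (1 + Real.exp (localField θ x j)))

/-- Pseudo-log-likelihood of n observations (no main effects). -/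
def pll {p n : ℕ} (x : Fin n → Fin p → Bool) (θ : PairIdx p → ℝ) : ℝ :=
  (n : ℝ)⁻¹ * ∑ i, pllOne (x i) θ

/-- One-observation pseudo-log-likelihood with main effects (matrix parameter). -/
def pllMainOne {p : ℕ} (x : Fin p → Bool) (Θ : Matrix (Fin p) (Fin p) ℝ) : ℝ :=
  ∑ j, (toR (x j) * (Θ j j + ∑ j' ∈ Finset.univ.erase j, Θ j j' * toR (x j'))
    - Real.log (1 + Real.exp (Θ j j + ∑ j' ∈ Finset.univ.erase j, Θ j j' * toR (x j'))))

/-- Pseudo-log-likelihood with main effects of n observations. -/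
def pllMain {p n : ℕ} (x : Fin n → Fin p → Bool) (Θ : Matrix (Fin p) (Fin p) ℝ) : ℝ :=
  (n : ℝ)⁻¹ * ∑ i, pllMainOne (x i) Θ

/-- Entrywise (Schur--Hadamard) product of matrices. -/
def hprod {p : ℕ} (A B : Matrix (Fin p) (Fin p) ℝ) : Matrix (Fin p) (Fin p) ℝ :=
  Matrix.of fun i j => A i j * B i j

/-- Partial derivative of l at θ in coordinate e. -/
def gradAt {p : ℕ} (l : (PairIdx p → ℝ) → ℝ) (θ : PairIdx p → ℝ) (e : PairIdx p) : ℝ :=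
  fderiv ℝ l θ (Pi.single e 1)

/-- Hessian matrix of l at θ. -/
def hessAt {p : ℕ} (l : (PairIdx p → ℝ) → ℝ) (θ : PairIdx p → ℝ) :
    Matrix (PairIdx p) (PairIdx p) ℝ :=
  Matrix.of fun e e' => fderiv ℝ (fun t => fderiv ℝ l t (Pi.single e' 1)) θ (Pi.single e 1)

/-- Design matrix of an observation: column (j,j') has x_{j'} in row j and x_j in row j'. -/
def designMat {p : ℕ} (x : Fin p → Bool) : Matrix (Fin p) (PairIdx p) ℝ :=
  Matrix.of fun j e => if j = e.1.1 then toR (x e.1.2) else if j = e.1.2 then toR (x e.1.1) else 0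

/-- Probability of E under the weight w on a finite sample space. -/
def finProb {Ω : Type*} [Fintype Ω] (w : Ω → ℝ) (E : Set Ω) : ℝ :=
  ∑ ω, Set.indicator E w ω

/-- Euclidean norm. -/
def euclNorm {ι : Type*} [Fintype ι] (v : ι → ℝ) : ℝ := Real.sqrt (∑ i, v i ^ 2)

/-- Sup norm of a vector. -/
def supNorm {ι : Type*} [Fintype ι] (v : ι → ℝ) : ℝ := ⨆ i, |v i|

/-- Smallest eigenvalue of a symmetric matrix, via the Rayleigh quotient. -/
def lamMin {ι : Type*} [Fintype ι] (A : Matrix ι ι ℝ) : ℝ :=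
  ⨅ v : {v : ι → ℝ // ∑ i, v i ^ 2 = 1}, v.1 ⬝ᵥ A.mulVec v.1

/-- Largest eigenvalue of a symmetric matrix, via the Rayleigh quotient. -/
def lamMax {ι : Type*} [Fintype ι] (A : Matrix ι ι ℝ) : ℝ :=
  ⨆ v : {v : ι → ℝ // ∑ i, v i ^ 2 = 1}, v.1 ⬝ᵥ A.mulVec v.1

/-- Maximum absolute row sum norm. -/
def rowSumNorm {ι κ : Type*} [Fintype ι] [Fintype κ] (A : Matrix ι κ ℝ) : ℝ :=
  ⨆ i, ∑ j, |A i j|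

/-- Submatrix with rows in S and columns in T. -/
def subm {ι : Type*} (A : Matrix ι ι ℝ) (S T : Finset ι) : Matrix ↥S ↥T ℝ :=
  A.submatrix (fun i => i.1) (fun j => j.1)

/-- Support of a parameter vector, as a finset of pairs. -/
def suppF {p : ℕ} (θ : PairIdx p → ℝ) : Finset (PairIdx p) :=
  Finset.univ.filter (fun e => θ e ≠ 0)

/-- Union of the supports over the K categories. -/
def unionSupp {p K : ℕ} (θb : Fin K → PairIdx p → ℝ) : Finset (PairIdx p) :=
  Finset.univ.filter (fun e => ∃ k, θb k e ≠ 0)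

/-- Population Fisher information of the pseudo-likelihood. -/
def Qpop {p : ℕ} (θb : PairIdx p → ℝ) : Matrix (PairIdx p) (PairIdx p) ℝ :=
  - ∑ x : Fin p → Bool, isingPmf θb x • hessAt (pllOne x) θb

/-- Sample Fisher information of the pseudo-likelihood at the truth. -/
def Qhat {p n : ℕ} (x : Fin n → Fin p → Bool) (θb : PairIdx p → ℝ) :
    Matrix (PairIdx p) (PairIdx p) ℝ :=
  - hessAt (pll x) θb

/-- Population second-moment matrix of the design matrices. -/
def Upop {p : ℕ} (θb : PairIdx p → ℝ) : Matrix (PairIdx p) (PairIdx p) ℝ :=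
  ∑ x : Fin p → Bool, isingPmf θb x • ((designMat x)ᵀ * designMat x)

/-- Sample second-moment matrix of the design matrices. -/
def Uhat {p n : ℕ} (x : Fin n → Fin p → Bool) : Matrix (PairIdx p) (PairIdx p) ℝ :=
  (n : ℝ)⁻¹ • ∑ i, ((designMat (x i))ᵀ * designMat (x i))

/-- Joint group-penalized pseudo-likelihood criterion F_λ. -/
def jointCrit {p K : ℕ} (nk : Fin K → ℕ) (x : ∀ k, Fin (nk k) → Fin p → Bool) (lam : ℝ)
    (θ : Fin K → PairIdx p → ℝ) : ℝ :=
  ∑ k, pll (x k) (θ k) - lam * ∑ e : PairIdx p, Real.sqrt (∑ k, |θ k e|)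

/-- Product (i.i.d. across observations and categories) weight of a multi-category sample. -/
def prodW {K p : ℕ} (nk : Fin K → ℕ) (θb : Fin K → PairIdx p → ℝ)
    (xs : ∀ k, Fin (nk k) → Fin p → Bool) : ℝ :=
  ∏ k, ∏ i, isingPmf (θb k) (xs k i)

end
namespace P21
noncomputable section
open Real Filter Finset Matrix Set

variable {p K : ℕ}

abbrev XX (p K : ℕ) := Matrix (Fin p) (Fin p) ℝ × (Fin K → Matrix (Fin p) (Fin p) ℝ)

def Dom2 (p K : ℕ) : Set (XX p K) :=
  {PG | PG.1.IsSymm ∧ (∀ i j, i ≠ j → 0 ≤ PG.1 i j) ∧ (∀ i, PG.1 i i = 1) ∧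
    ∀ k, (PG.2 k).IsSymm}

def Dom1 (p K : ℕ) : Set (Fin K → Matrix (Fin p) (Fin p) ℝ) := {Θs | ∀ k, (Θs k).IsSymm}

def thmap (PG : XX p K) : Fin K → Matrix (Fin p) (Fin p) ℝ := fun k => hprod PG.1 (PG.2 k)

def C2 (η1 η2 : ℝ) (L : (Fin K → Matrix (Fin p) (Fin p) ℝ) → ℝ) (PG : XX p K) : ℝ :=
  L (thmap PG) - η1 * ∑ e : PairIdx p, PG.1 e.1.1 e.1.2
    - η2 * ∑ e : PairIdx p, ∑ k, |PG.2 k e.1.1 e.1.2|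

def C1 (lam : ℝ) (L : (Fin K → Matrix (Fin p) (Fin p) ℝ) → ℝ)
    (Θs : Fin K → Matrix (Fin p) (Fin p) ℝ) : ℝ :=
  L Θs - lam * ∑ e : PairIdx p, Real.sqrt (∑ k, |Θs k e.1.1 e.1.2|)

lemma amgm {η1 η2 : ℝ} (h1 : 0 < η1) (h2 : 0 < η2) {a b : ℝ} (ha : 0 ≤ a) (hb : 0 ≤ b) :
    2 * Real.sqrt (η1 * η2) * Real.sqrt (a * b) ≤ η1 * a + η2 * b := by
  have key : Real.sqrt (η1 * η2) * Real.sqrt (a * b) = Real.sqrt (η1 * a) * Real.sqrt (η2 * b) := by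
    rw [← Real.sqrt_mul (by positivity), ← Real.sqrt_mul (by positivity)]
    ring_nf
  nlinarith [sq_nonneg (Real.sqrt (η1 * a) - Real.sqrt (η2 * b)),
    Real.sq_sqrt (by positivity : (0:ℝ) ≤ η1 * a), Real.sq_sqrt (by positivity : (0:ℝ) ≤ η2 * b)]

lemma amgm_eq {η1 η2 : ℝ} (h1 : 0 < η1) (h2 : 0 < η2) {a b : ℝ} (ha : 0 ≤ a) (hb : 0 ≤ b)
    (hbal : η1 * a = η2 * b) :
    η1 * a + η2 * b = 2 * Real.sqrt (η1 * η2) * Real.sqrt (a * b) := by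
  have key : Real.sqrt (η1 * η2) * Real.sqrt (a * b) = Real.sqrt (η1 * a) * Real.sqrt (η2 * b) := by
    rw [← Real.sqrt_mul (by positivity), ← Real.sqrt_mul (by positivity)]
    ring_nf
  rw [mul_assoc, key, ← hbal, Real.mul_self_sqrt (by positivity : (0:ℝ) ≤ η1 * a)]
  ring

lemma sum_abs_mul (φ : ℝ) (hφ : 0 ≤ φ) (g : Fin K → ℝ) :
    ∑ k, |φ * g k| = φ * ∑ k, |g k| := by
  rw [Finset.mul_sum]
  exact Finset.sum_congr rfl fun k _ => by rw [abs_mul, abs_of_nonneg hφ]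

lemma pair_le {η1 η2 : ℝ} (h1 : 0 < η1) (h2 : 0 < η2) {φ : ℝ} (hφ : 0 ≤ φ) (g : Fin K → ℝ) :
    2 * Real.sqrt (η1 * η2) * Real.sqrt (∑ k, |φ * g k|) ≤ η1 * φ + η2 * ∑ k, |g k| := by
  rw [sum_abs_mul φ hφ g]
  exact amgm h1 h2 hφ (Finset.sum_nonneg fun k _ => abs_nonneg _)

lemma pair_eq {η1 η2 : ℝ} (h1 : 0 < η1) (h2 : 0 < η2) {φ : ℝ} (hφ : 0 ≤ φ) (g : Fin K → ℝ)
    (hbal : η1 * φ = η2 * ∑ k, |g k|) :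
    η1 * φ + η2 * ∑ k, |g k| = 2 * Real.sqrt (η1 * η2) * Real.sqrt (∑ k, |φ * g k|) := by
  rw [sum_abs_mul φ hφ g]
  exact amgm_eq h1 h2 hφ (Finset.sum_nonneg fun k _ => abs_nonneg _) hbal

end
end P21
namespace P21
noncomputable section
open Real Filter Finset Matrix Set

variable {p K : ℕ}

def sAbs (θ : Fin K → Matrix (Fin p) (Fin p) ℝ) (i j : Fin p) : ℝ := ∑ k, |θ k i j|

lemma sAbs_nonneg (θ : Fin K → Matrix (Fin p) (Fin p) ℝ) (i j : Fin p) : 0 ≤ sAbs θ i j :=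
  Finset.sum_nonneg fun _ _ => abs_nonneg _

lemma abs_le_sAbs (θ : Fin K → Matrix (Fin p) (Fin p) ℝ) (k : Fin K) (i j : Fin p) :
    |θ k i j| ≤ sAbs θ i j := by
  exact Finset.single_le_sum (f := fun k => |θ k i j|) (fun _ _ => abs_nonneg _) (Finset.mem_univ k)

lemma entry_eq_zero {θ : Fin K → Matrix (Fin p) (Fin p) ℝ} {i j : Fin p}
    (h : sAbs θ i j = 0) (k : Fin K) : θ k i j = 0 := by
  have := abs_le_sAbs θ k i j
  rw [h] at this
  exact abs_eq_zero.mp (le_antisymm this (abs_nonneg _))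

def balPhi (η1 η2 : ℝ) (θ : Fin K → Matrix (Fin p) (Fin p) ℝ) : Matrix (Fin p) (Fin p) ℝ :=
  Matrix.of fun i j => if i = j then 1 else Real.sqrt (η2 / η1 * sAbs θ i j)

def balGam (η1 η2 : ℝ) (θ : Fin K → Matrix (Fin p) (Fin p) ℝ) (k : Fin K) :
    Matrix (Fin p) (Fin p) ℝ :=
  Matrix.of fun i j => if i = j then θ k i i else θ k i j / Real.sqrt (η2 / η1 * sAbs θ i j)

def balPt (η1 η2 : ℝ) (θ : Fin K → Matrix (Fin p) (Fin p) ℝ) : XX p K :=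
  (balPhi η1 η2 θ, fun k => balGam η1 η2 θ k)

lemma thmap_balPt {η1 η2 : ℝ} (h1 : 0 < η1) (h2 : 0 < η2)
    (θ : Fin K → Matrix (Fin p) (Fin p) ℝ) : thmap (balPt η1 η2 θ) = θ := by
  funext k
  ext i j
  simp only [thmap, balPt, hprod, balPhi, balGam, Matrix.of_apply]
  by_cases hij : i = j
  · simp [hij]
  · simp only [hij, if_false]
    rcases eq_or_lt_of_le (sAbs_nonneg θ i j) with hs | hs
    · rw [entry_eq_zero hs.symm k]
      simp
    · rw [mul_div_cancel₀]
      exact (Real.sqrt_pos.mpr (by positivity)).ne'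

lemma balPt_balanced {η1 η2 : ℝ} (h1 : 0 < η1) (h2 : 0 < η2)
    (θ : Fin K → Matrix (Fin p) (Fin p) ℝ) {i j : Fin p} (hij : i ≠ j) :
    η1 * (balPt η1 η2 θ).1 i j = η2 * ∑ k, |(balPt η1 η2 θ).2 k i j| := by
  simp only [balPt, balPhi, balGam, Matrix.of_apply, hij, if_false]
  have hsum : ∑ k, |θ k i j / Real.sqrt (η2 / η1 * sAbs θ i j)|
      = sAbs θ i j / Real.sqrt (η2 / η1 * sAbs θ i j) := by
    rw [sAbs, Finset.sum_div]
    exact Finset.sum_congr rfl fun k _ => by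
      rw [abs_div, abs_of_nonneg (Real.sqrt_nonneg _)]
  rw [hsum]
  rcases eq_or_lt_of_le (sAbs_nonneg θ i j) with hs | hs
  · rw [← hs, mul_zero, Real.sqrt_zero, mul_zero, zero_div, mul_zero]
  · have hq : (0:ℝ) < Real.sqrt (η2 / η1 * sAbs θ i j) := Real.sqrt_pos.mpr (by positivity)
    have hqq : Real.sqrt (η2 / η1 * sAbs θ i j) * Real.sqrt (η2 / η1 * sAbs θ i j)
        = η2 / η1 * sAbs θ i j := Real.mul_self_sqrt (by positivity)
    rw [← mul_div_assoc, eq_div_iff hq.ne', mul_assoc, hqq]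
    field_simp

lemma balPt_mem {η1 η2 : ℝ} {θ : Fin K → Matrix (Fin p) (Fin p) ℝ} (hθ : θ ∈ Dom1 p K) :
    balPt η1 η2 θ ∈ Dom2 p K := by
  have hs : ∀ i j, sAbs θ i j = sAbs θ j i := fun i j =>
    Finset.sum_congr rfl fun k _ => by rw [(hθ k).apply]
  refine ⟨Matrix.IsSymm.ext fun i j => ?_, fun i j hij => ?_, fun i => ?_, fun k => Matrix.IsSymm.ext fun i j => ?_⟩
  · simp only [balPt, balPhi, Matrix.of_apply]
    rcases eq_or_ne i j with h | h
    · simp [h]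
    · simp [h, h.symm, hs j i]
  · simpa [balPt, balPhi, Matrix.of_apply, hij] using Real.sqrt_nonneg _
  · simp [balPt, balPhi]
  · simp only [balPt, balGam, Matrix.of_apply]
    rcases eq_or_ne i j with h | h
    · simp [h]
    · simp [h, h.symm, hs j i, (hθ k).apply]

end
end P21
namespace P21
noncomputable section
open Real Filter Finset Matrix Set

variable {p K : ℕ}

lemma ne_of_pair (e : PairIdx p) : e.1.1 ≠ e.1.2 := ne_of_lt e.2

lemma C2_le_C1 {η1 η2 : ℝ} (h1 : 0 < η1) (h2 : 0 < η2)
    (L : (Fin K → Matrix (Fin p) (Fin p) ℝ) → ℝ) {PG : XX p K} (hPG : PG ∈ Dom2 p K) :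
    C2 η1 η2 L PG ≤ C1 (2 * Real.sqrt (η1 * η2)) L (thmap PG) := by
  simp only [C2, C1]
  have key : 2 * Real.sqrt (η1 * η2) * ∑ e : PairIdx p,
        Real.sqrt (∑ k, |thmap PG k e.1.1 e.1.2|)
      ≤ η1 * ∑ e : PairIdx p, PG.1 e.1.1 e.1.2
        + η2 * ∑ e : PairIdx p, ∑ k, |PG.2 k e.1.1 e.1.2| := by
    rw [Finset.mul_sum, Finset.mul_sum, Finset.mul_sum, ← Finset.sum_add_distrib]
    refine Finset.sum_le_sum fun e _ => ?_
    have he : ∀ k, thmap PG k e.1.1 e.1.2 = PG.1 e.1.1 e.1.2 * PG.2 k e.1.1 e.1.2 := by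
      intro k; simp [thmap, hprod]
    simp only [he]
    exact pair_le h1 h2 (hPG.2.1 _ _ (ne_of_pair e)) _
  linarith

lemma C2_eq_C1 {η1 η2 : ℝ} (h1 : 0 < η1) (h2 : 0 < η2)
    (L : (Fin K → Matrix (Fin p) (Fin p) ℝ) → ℝ) {PG : XX p K} (hPG : PG ∈ Dom2 p K)
    (hbal : ∀ e : PairIdx p, η1 * PG.1 e.1.1 e.1.2 = η2 * ∑ k, |PG.2 k e.1.1 e.1.2|) :
    C2 η1 η2 L PG = C1 (2 * Real.sqrt (η1 * η2)) L (thmap PG) := by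
  simp only [C2, C1]
  have key : η1 * ∑ e : PairIdx p, PG.1 e.1.1 e.1.2
        + η2 * ∑ e : PairIdx p, ∑ k, |PG.2 k e.1.1 e.1.2|
      = 2 * Real.sqrt (η1 * η2) * ∑ e : PairIdx p,
        Real.sqrt (∑ k, |thmap PG k e.1.1 e.1.2|) := by
    rw [Finset.mul_sum, Finset.mul_sum, Finset.mul_sum, ← Finset.sum_add_distrib]
    refine Finset.sum_congr rfl fun e _ => ?_
    have he : ∀ k, thmap PG k e.1.1 e.1.2 = PG.1 e.1.1 e.1.2 * PG.2 k e.1.1 e.1.2 := by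
      intro k; simp [thmap, hprod]
    simp only [he]
    exact pair_eq h1 h2 (hPG.2.1 _ _ (ne_of_pair e)) _ (hbal e)
  linarith

lemma balPt_thmap_eq {η1 η2 : ℝ} (h1 : 0 < η1) (h2 : 0 < η2) {PG : XX p K}
    (hPG : PG ∈ Dom2 p K)
    (hbal : ∀ i j, i ≠ j → η1 * PG.1 i j = η2 * ∑ k, |PG.2 k i j|) :
    balPt η1 η2 (thmap PG) = PG := by
  obtain ⟨hsym, hpos, hdiag, hgsym⟩ := hPG
  have hkey : ∀ i j, i ≠ j →
      Real.sqrt (η2 / η1 * sAbs (thmap PG) i j) = PG.1 i j := by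
    intro i j hij
    have hS : sAbs (thmap PG) i j = PG.1 i j * ∑ k, |PG.2 k i j| := by
      simp only [sAbs, thmap, hprod, Matrix.of_apply]
      exact sum_abs_mul _ (hpos i j hij) _
    have hsg : η2 * (PG.1 i j * ∑ k, |PG.2 k i j|) = η1 * (PG.1 i j)^2 := by
      rw [← mul_assoc, mul_comm η2, mul_assoc, ← hbal i j hij]; ring
    have hh : η2 / η1 * sAbs (thmap PG) i j = (PG.1 i j)^2 := by
      rw [hS]
      field_simp
      nlinarith [hsg]
    rw [hh, Real.sqrt_sq (hpos i j hij)]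
  refine Prod.ext ?_ ?_
  · ext i j
    simp only [balPt, balPhi, Matrix.of_apply]
    rcases eq_or_ne i j with h | h
    · rw [if_pos h, h, hdiag j]
    · rw [if_neg h, hkey i j h]
  · funext k; ext i j
    simp only [balPt, balGam, Matrix.of_apply]
    rcases eq_or_ne i j with h | h
    · subst h; rw [if_pos rfl]; simp [thmap, hprod, hdiag i]
    · rw [if_neg h, hkey i j h]
      simp only [thmap, hprod, Matrix.of_apply]
      rcases eq_or_lt_of_le (hpos i j h) with h0 | h0
      · have hz : ∑ k, |PG.2 k i j| = 0 := by
          have hb := hbal i j h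
          rw [← h0, mul_zero] at hb
          exact (mul_eq_zero.mp hb.symm).resolve_left h2.ne'
        have hzz : PG.2 k i j = 0 := by
          have := (Finset.sum_eq_zero_iff_of_nonneg (fun _ _ => abs_nonneg _)).mp hz k
            (Finset.mem_univ k)
          exact abs_eq_zero.mp this
        rw [← h0, hzz]
        simp
      · rw [mul_div_cancel_left₀ _ h0.ne']

end
end P21
namespace P21
noncomputable section
open Real Filter Finset Matrix Set

variable {p K : ℕ}

lemma cont_entry (k : Fin K) (i j : Fin p) :
    Continuous fun θ : Fin K → Matrix (Fin p) (Fin p) ℝ => θ k i j :=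
  (continuous_apply k).matrix_elem i j

lemma cont_sAbs (i j : Fin p) :
    Continuous fun θ : Fin K → Matrix (Fin p) (Fin p) ℝ => sAbs θ i j := by
  unfold sAbs
  exact continuous_finset_sum _ fun k _ => (cont_entry k i j).abs

lemma thmap_continuous : Continuous (thmap : XX p K → Fin K → Matrix (Fin p) (Fin p) ℝ) := by
  apply continuous_pi
  intro k
  apply continuous_matrix
  intro i j
  simp only [thmap, hprod, Matrix.of_apply]
  exact (continuous_fst.matrix_elem i j).mul (((continuous_apply k).comp continuous_snd).matrix_elem i j)

lemma bound_gam {η1 η2 : ℝ} (h1 : 0 < η1) (h2 : 0 < η2)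
    (θ : Fin K → Matrix (Fin p) (Fin p) ℝ) (k : Fin K) (i j : Fin p) :
    ‖θ k i j / Real.sqrt (η2 / η1 * sAbs θ i j)‖ ≤ Real.sqrt (η1 / η2 * sAbs θ i j) := by
  rcases eq_or_lt_of_le (sAbs_nonneg θ i j) with hs | hs
  · rw [entry_eq_zero hs.symm k, zero_div, norm_zero]
    exact Real.sqrt_nonneg _
  · have hq : 0 < Real.sqrt (η2 / η1 * sAbs θ i j) := Real.sqrt_pos.mpr (by positivity)
    have key : Real.sqrt (η1 / η2 * sAbs θ i j) * Real.sqrt (η2 / η1 * sAbs θ i j)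
        = sAbs θ i j := by
      rw [← Real.sqrt_mul (by positivity)]
      have he : η1 / η2 * sAbs θ i j * (η2 / η1 * sAbs θ i j) = (sAbs θ i j) ^ 2 := by
        field_simp
      rw [he, Real.sqrt_sq hs.le]
    rw [Real.norm_eq_abs, abs_div, abs_of_nonneg (Real.sqrt_nonneg _), div_le_iff₀ hq, key]
    exact abs_le_sAbs θ k i j

lemma balPt_contAt {η1 η2 : ℝ} (h1 : 0 < η1) (h2 : 0 < η2)
    (θ0 : Fin K → Matrix (Fin p) (Fin p) ℝ) :
    ContinuousAt (balPt η1 η2 (p := p) (K := K)) θ0 := by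
  apply ContinuousAt.prodMk
  · apply Continuous.continuousAt
    apply continuous_matrix
    intro i j
    simp only [balPhi, Matrix.of_apply]
    rcases eq_or_ne i j with h | h
    · simp only [h, if_pos rfl]
      exact continuous_const
    · simp only [h, if_neg h]
      exact Real.continuous_sqrt.comp (continuous_const.mul (cont_sAbs i j))
  · apply continuousAt_pi.2
    intro k
    apply continuousAt_pi.2
    intro i
    apply continuousAt_pi.2
    intro j
    simp only [balGam, Matrix.of_apply]
    rcases eq_or_ne i j with h | h
    · simp only [h, if_pos rfl]
      exact (cont_entry k j j).continuousAt
    · simp only [if_neg h]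
      rcases eq_or_lt_of_le (sAbs_nonneg θ0 i j) with hs | hs
      · have hval : θ0 k i j / Real.sqrt (η2 / η1 * sAbs θ0 i j) = 0 := by
          rw [entry_eq_zero hs.symm k, zero_div]
        rw [ContinuousAt, hval]
        apply squeeze_zero_norm (fun θ => bound_gam h1 h2 θ k i j)
        have ht : Filter.Tendsto (fun θ : Fin K → Matrix (Fin p) (Fin p) ℝ =>
            Real.sqrt (η1 / η2 * sAbs θ i j)) (nhds θ0)
            (nhds (Real.sqrt (η1 / η2 * sAbs θ0 i j))) :=
          (Real.continuous_sqrt.comp (continuous_const.mul (cont_sAbs i j))).tendsto θ0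
        rwa [← hs, mul_zero, Real.sqrt_zero] at ht
      · exact ((cont_entry k i j).continuousAt).div
          ((Real.continuous_sqrt.comp (continuous_const.mul (cont_sAbs i j))).continuousAt)
          (Real.sqrt_pos.mpr (by positivity)).ne'

end
end P21
namespace P21
noncomputable section
open Real Filter Finset Matrix Set

variable {p K : ℕ}

lemma thmap_mem {PG : XX p K} (hPG : PG ∈ Dom2 p K) : thmap PG ∈ Dom1 p K := by
  intro k
  apply Matrix.IsSymm.ext
  intro i j
  simp only [thmap, hprod, Matrix.of_apply]
  rw [hPG.1.apply, (hPG.2.2.2 k).apply]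

lemma forward_main {η1 η2 : ℝ} (h1 : 0 < η1) (h2 : 0 < η2)
    (L : (Fin K → Matrix (Fin p) (Fin p) ℝ) → ℝ) {θh : Fin K → Matrix (Fin p) (Fin p) ℝ}
    (hθ : θh ∈ Dom1 p K)
    (hmax : IsLocalMaxOn (C1 (2 * Real.sqrt (η1 * η2)) L) (Dom1 p K) θh) :
    ∃ PG ∈ Dom2 p K, IsLocalMaxOn (C2 η1 η2 L) (Dom2 p K) PG ∧
      ∀ k, θh k = hprod PG.1 (PG.2 k) := by
  have hthb : thmap (balPt η1 η2 θh) = θh := thmap_balPt h1 h2 θh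
  refine ⟨balPt η1 η2 θh, balPt_mem hθ, ?_, fun k => (congrFun hthb k).symm⟩
  have hbal : ∀ e : PairIdx p, η1 * (balPt η1 η2 θh).1 e.1.1 e.1.2
      = η2 * ∑ k, |(balPt η1 η2 θh).2 k e.1.1 e.1.2| :=
    fun e => balPt_balanced h1 h2 θh (ne_of_pair e)
  have hEq : C2 η1 η2 L (balPt η1 η2 θh) = C1 (2 * Real.sqrt (η1 * η2)) L θh := by
    rw [C2_eq_C1 h1 h2 L (balPt_mem hθ) hbal, hthb]
  have hT : Tendsto thmap (nhdsWithin (balPt η1 η2 θh) (Dom2 p K))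
      (nhdsWithin θh (Dom1 p K)) := by
    have := (thmap_continuous.continuousWithinAt
      (s := Dom2 p K) (x := balPt η1 η2 θh)).tendsto_nhdsWithin
      (fun PG hPG => thmap_mem hPG)
    rwa [hthb] at this
  have hev : ∀ᶠ y in nhdsWithin (balPt η1 η2 θh) (Dom2 p K),
      C1 (2 * Real.sqrt (η1 * η2)) L (thmap y) ≤ C1 (2 * Real.sqrt (η1 * η2)) L θh :=
    hT.eventually hmax
  show ∀ᶠ y in nhdsWithin (balPt η1 η2 θh) (Dom2 p K),
      C2 η1 η2 L y ≤ C2 η1 η2 L (balPt η1 η2 θh)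
  filter_upwards [hev, eventually_mem_nhdsWithin] with y hy hyD
  calc C2 η1 η2 L y ≤ C1 (2 * Real.sqrt (η1 * η2)) L (thmap y) := C2_le_C1 h1 h2 L hyD
    _ ≤ C1 (2 * Real.sqrt (η1 * η2)) L θh := hy
    _ = C2 η1 η2 L (balPt η1 η2 θh) := hEq.symm

end
end P21
namespace P21
noncomputable section
open Real Filter Finset Matrix Set

variable {p K : ℕ}

def pert (PG : XX p K) (a b : Fin p) (s t : ℝ) : XX p K :=
  (Matrix.of fun i j => if (i = a ∧ j = b) ∨ (i = b ∧ j = a) then s * PG.1 a b else PG.1 i j,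
   fun k => Matrix.of fun i j =>
     if (i = a ∧ j = b) ∨ (i = b ∧ j = a) then t * PG.2 k a b else PG.2 k i j)

lemma cond_swap (a b i j : Fin p) :
    ((j = a ∧ i = b) ∨ (j = b ∧ i = a)) ↔ ((i = a ∧ j = b) ∨ (i = b ∧ j = a)) := by tauto

lemma cond_diag {a b i : Fin p} (hab : a ≠ b) :
    ¬ ((i = a ∧ i = b) ∨ (i = b ∧ i = a)) := by
  rintro (⟨h1, h2⟩ | ⟨h1, h2⟩) <;> exact hab (h1 ▸ h2 ▸ rfl)

lemma pert_mem {PG : XX p K} (hPG : PG ∈ Dom2 p K) {a b : Fin p} (hab : a ≠ b)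
    {s : ℝ} (t : ℝ) (hs : 0 ≤ s) : pert PG a b s t ∈ Dom2 p K := by
  obtain ⟨hsym, hpos, hdiag, hgsym⟩ := hPG
  refine ⟨Matrix.IsSymm.ext fun i j => ?_, fun i j hij => ?_, fun i => ?_,
    fun k => Matrix.IsSymm.ext fun i j => ?_⟩
  · simp only [pert, Matrix.of_apply, cond_swap a b i j]
    by_cases h : (i = a ∧ j = b) ∨ (i = b ∧ j = a)
    · simp [h]
    · simp [h, hsym.apply]
  · simp only [pert, Matrix.of_apply]
    by_cases h : (i = a ∧ j = b) ∨ (i = b ∧ j = a)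
    · simp only [h, if_true]
      exact mul_nonneg hs (hpos a b hab)
    · simp only [h, if_false]
      exact hpos i j hij
  · simp only [pert, Matrix.of_apply, cond_diag hab, if_false]
    exact hdiag i
  · simp only [pert, Matrix.of_apply, cond_swap a b i j]
    by_cases h : (i = a ∧ j = b) ∨ (i = b ∧ j = a)
    · simp [h]
    · simp [h, (hgsym k).apply]

lemma pert_thmap {PG : XX p K} (hPG : PG ∈ Dom2 p K) {a b : Fin p}
    {s t : ℝ} (hst : s * t = 1 ∨ PG.1 a b = 0) :
    thmap (pert PG a b s t) = thmap PG := by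
  funext k
  ext i j
  simp only [thmap, hprod, pert, Matrix.of_apply]
  by_cases h : (i = a ∧ j = b) ∨ (i = b ∧ j = a)
  · have hval : PG.1 i j = PG.1 a b ∧ PG.2 k i j = PG.2 k a b := by
      rcases h with ⟨h1, h2⟩ | ⟨h1, h2⟩
      · rw [h1, h2]; exact ⟨rfl, rfl⟩
      · rw [h1, h2]; exact ⟨hPG.1.apply a b, (hPG.2.2.2 k).apply a b⟩
    simp only [h, if_true, hval.1, hval.2]
    rcases hst with hst | hst
    · linear_combination PG.1 a b * PG.2 k a b * hst
    · rw [hst]; ring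
  · simp [h]

lemma pert_sum1 (PG : XX p K) (e : PairIdx p) (s t : ℝ) :
    ∑ e' : PairIdx p, (pert PG e.1.1 e.1.2 s t).1 e'.1.1 e'.1.2
      = (∑ e' : PairIdx p, PG.1 e'.1.1 e'.1.2) + (s - 1) * PG.1 e.1.1 e.1.2 := by
  rw [← Finset.sum_erase_add _ _ (Finset.mem_univ e),
    ← Finset.sum_erase_add _ (fun e' : PairIdx p => PG.1 e'.1.1 e'.1.2) (Finset.mem_univ e)]
  have h1 : ∀ e' : PairIdx p, e' ≠ e →
      (pert PG e.1.1 e.1.2 s t).1 e'.1.1 e'.1.2 = PG.1 e'.1.1 e'.1.2 := by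
    intro e' hne
    simp only [pert, Matrix.of_apply]
    rw [if_neg]
    rintro (⟨h1, h2⟩ | ⟨h1, h2⟩)
    · exact hne (Subtype.ext (Prod.ext h1 h2))
    · exact absurd (h1 ▸ h2 ▸ e'.2) (lt_asymm e.2)
  have h2 : Finset.sum ((Finset.univ : Finset (PairIdx p)).erase e)
        (fun e' => (pert PG e.1.1 e.1.2 s t).1 e'.1.1 e'.1.2)
      = Finset.sum ((Finset.univ : Finset (PairIdx p)).erase e)
        (fun e' => PG.1 e'.1.1 e'.1.2) :=
    Finset.sum_congr rfl fun e' he' => h1 e' (Finset.ne_of_mem_erase he')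
  have h3 : (pert PG e.1.1 e.1.2 s t).1 e.1.1 e.1.2 = s * PG.1 e.1.1 e.1.2 := by
    simp [pert]
  rw [h2, h3]
  ring

lemma pert_sum2 (PG : XX p K) (e : PairIdx p) (s : ℝ) {t : ℝ} (ht : 0 ≤ t) :
    ∑ e' : PairIdx p, ∑ k, |(pert PG e.1.1 e.1.2 s t).2 k e'.1.1 e'.1.2|
      = (∑ e' : PairIdx p, ∑ k, |PG.2 k e'.1.1 e'.1.2|)
        + (t - 1) * ∑ k, |PG.2 k e.1.1 e.1.2| := by
  rw [← Finset.sum_erase_add _ _ (Finset.mem_univ e),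
    ← Finset.sum_erase_add _ (fun e' : PairIdx p => ∑ k, |PG.2 k e'.1.1 e'.1.2|)
      (Finset.mem_univ e)]
  have h1 : ∀ e' : PairIdx p, e' ≠ e → ∀ k,
      (pert PG e.1.1 e.1.2 s t).2 k e'.1.1 e'.1.2 = PG.2 k e'.1.1 e'.1.2 := by
    intro e' hne k
    simp only [pert, Matrix.of_apply]
    rw [if_neg]
    rintro (⟨h1, h2⟩ | ⟨h1, h2⟩)
    · exact hne (Subtype.ext (Prod.ext h1 h2))
    · exact absurd (h1 ▸ h2 ▸ e'.2) (lt_asymm e.2)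
  have h2 : Finset.sum ((Finset.univ : Finset (PairIdx p)).erase e)
        (fun e' => ∑ k, |(pert PG e.1.1 e.1.2 s t).2 k e'.1.1 e'.1.2|)
      = Finset.sum ((Finset.univ : Finset (PairIdx p)).erase e)
        (fun e' => ∑ k, |PG.2 k e'.1.1 e'.1.2|) :=
    Finset.sum_congr rfl fun e' he' => Finset.sum_congr rfl fun k _ => by
      rw [h1 e' (Finset.ne_of_mem_erase he') k]
  have h3 : ∑ k, |(pert PG e.1.1 e.1.2 s t).2 k e.1.1 e.1.2|
      = t * ∑ k, |PG.2 k e.1.1 e.1.2| := by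
    have : ∀ k : Fin K, (pert PG e.1.1 e.1.2 s t).2 k e.1.1 e.1.2 = t * PG.2 k e.1.1 e.1.2 := by
      intro k; simp [pert]
    simp only [this]
    exact sum_abs_mul t ht _
  rw [h2, h3]
  ring

lemma C2_pert {η1 η2 : ℝ} (L : (Fin K → Matrix (Fin p) (Fin p) ℝ) → ℝ)
    {PG : XX p K} (hPG : PG ∈ Dom2 p K) (e : PairIdx p) (s : ℝ) {t : ℝ} (ht : 0 ≤ t)
    (hst : s * t = 1 ∨ PG.1 e.1.1 e.1.2 = 0) :
    C2 η1 η2 L (pert PG e.1.1 e.1.2 s t)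
      = C2 η1 η2 L PG + η1 * (1 - s) * PG.1 e.1.1 e.1.2
        + η2 * (1 - t) * ∑ k, |PG.2 k e.1.1 e.1.2| := by
  simp only [C2]
  rw [pert_thmap hPG hst, pert_sum1 PG e s t, pert_sum2 PG e s ht]
  ring

lemma pert_contAt (PG : XX p K) (a b : Fin p) {f g : ℝ → ℝ} {t0 : ℝ}
    (hf : ContinuousAt f t0) (hg : ContinuousAt g t0) :
    ContinuousAt (fun t => pert PG a b (f t) (g t)) t0 := by
  apply ContinuousAt.prodMk
  · apply continuousAt_pi.2; intro i; apply continuousAt_pi.2; intro j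
    simp only [pert, Matrix.of_apply]
    by_cases h : (i = a ∧ j = b) ∨ (i = b ∧ j = a)
    · simp only [if_pos h]
      exact hf.mul continuousAt_const
    · simp only [if_neg h]
      exact continuousAt_const
  · apply continuousAt_pi.2; intro k
    apply continuousAt_pi.2; intro i
    apply continuousAt_pi.2; intro j
    simp only [pert, Matrix.of_apply]
    by_cases h : (i = a ∧ j = b) ∨ (i = b ∧ j = a)
    · simp only [if_pos h]
      exact hg.mul continuousAt_const
    · simp only [if_neg h]
      exact continuousAt_const

lemma pert_self {PG : XX p K} (hPG : PG ∈ Dom2 p K) (a b : Fin p) :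
    pert PG a b 1 1 = PG := by
  refine Prod.ext ?_ ?_
  · ext i j
    simp only [pert, Matrix.of_apply]
    by_cases h : (i = a ∧ j = b) ∨ (i = b ∧ j = a)
    · rw [if_pos h, one_mul]
      rcases h with ⟨h1, h2⟩ | ⟨h1, h2⟩
      · rw [h1, h2]
      · rw [h1, h2, hPG.1.apply]
    · rw [if_neg h]
  · funext k
    ext i j
    simp only [pert, Matrix.of_apply]
    by_cases h : (i = a ∧ j = b) ∨ (i = b ∧ j = a)
    · rw [if_pos h, one_mul]
      rcases h with ⟨h1, h2⟩ | ⟨h1, h2⟩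
      · rw [h1, h2]
      · rw [h1, h2, (hPG.2.2.2 k).apply]
    · rw [if_neg h]

lemma contradiction_of_curve {Y : Type*} [TopologicalSpace Y] {F : Y → ℝ} {D : Set Y} {x0 : Y}
    (hmax : IsLocalMaxOn F D x0) {l : Filter ℝ} [hl : l.NeBot] {c : ℝ → Y} {t0 : ℝ}
    (hle : l ≤ nhds t0) (hc : ContinuousAt c t0) (hc0 : c t0 = x0)
    (hmem : ∀ᶠ t in l, c t ∈ D) (hgt : ∀ᶠ t in l, F x0 < F (c t)) : False := by
  have hT : Tendsto c l (nhdsWithin x0 D) := by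
    rw [tendsto_nhdsWithin_iff]
    exact ⟨hc0 ▸ (hc.tendsto.mono_left hle), hmem⟩
  have hev : ∀ᶠ t in l, F (c t) ≤ F x0 := hT.eventually hmax
  obtain ⟨t, h1', h2'⟩ := (hev.and hgt).exists
  exact absurd h1' (not_le.mpr h2')

end
end P21
namespace P21
noncomputable section
open Real Filter Finset Matrix Set

variable {p K : ℕ}

lemma balance_at_max {η1 η2 : ℝ} (h1 : 0 < η1) (h2 : 0 < η2)
    (L : (Fin K → Matrix (Fin p) (Fin p) ℝ) → ℝ) {PG : XX p K} (hPG : PG ∈ Dom2 p K)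
    (hmax : IsLocalMaxOn (C2 η1 η2 L) (Dom2 p K) PG) (e : PairIdx p) :
    η1 * PG.1 e.1.1 e.1.2 = η2 * ∑ k, |PG.2 k e.1.1 e.1.2| := by
  have hφ0 : 0 ≤ PG.1 e.1.1 e.1.2 := hPG.2.1 _ _ (ne_of_pair e)
  have hc0 : 0 ≤ ∑ k, |PG.2 k e.1.1 e.1.2| := Finset.sum_nonneg fun _ _ => abs_nonneg _
  haveI hnb1 : (nhdsWithin (1:ℝ) (Set.Iio 1)).NeBot :=
    nhdsWithin_Iio_self_neBot' ⟨0, by norm_num⟩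
  haveI hnb2 : (nhdsWithin (1:ℝ) (Set.Ioi 1)).NeBot :=
    nhdsGT_neBot_of_exists_gt ⟨2, by norm_num⟩
  by_contra hne
  rcases eq_or_lt_of_le hφ0 with hφz | hφpos
  · -- φ = 0, must have c > 0
    have hcpos : 0 < ∑ k, |PG.2 k e.1.1 e.1.2| := by
      rcases eq_or_lt_of_le hc0 with hcz | h
      · exact absurd (by rw [← hφz, ← hcz, mul_zero, mul_zero]) hne
      · exact h
    refine contradiction_of_curve hmax (l := nhdsWithin 1 (Set.Iio 1))
      (c := fun t => pert PG e.1.1 e.1.2 1 t) (t0 := 1) nhdsWithin_le_nhds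
      (pert_contAt PG e.1.1 e.1.2 continuousAt_const continuousAt_id)
      (pert_self hPG e.1.1 e.1.2) ?_ ?_
    · filter_upwards [Ioo_mem_nhdsLT_of_mem
        (Set.mem_Ioc.mpr ⟨zero_lt_one, le_refl (1:ℝ)⟩)] with t ht
      exact pert_mem hPG (ne_of_pair e) t zero_le_one
    · filter_upwards [Ioo_mem_nhdsLT_of_mem
        (Set.mem_Ioc.mpr ⟨zero_lt_one, le_refl (1:ℝ)⟩)] with t ht
      rw [C2_pert L hPG e 1 ht.1.le (Or.inr hφz.symm), ← hφz]
      nlinarith [mul_pos h2 (mul_pos (sub_pos.mpr ht.2) hcpos)]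
  · rcases lt_or_gt_of_ne hne with hlt | hgt
    · -- η1 φ < η2 c : push t > 1
      have hcpos : 0 < ∑ k, |PG.2 k e.1.1 e.1.2| := by nlinarith
      set M := min 2 (η2 * (∑ k, |PG.2 k e.1.1 e.1.2|) / (η1 * PG.1 e.1.1 e.1.2)) with hM
      have hM1 : 1 < M := lt_min one_lt_two ((one_lt_div (by positivity)).mpr hlt)
      refine contradiction_of_curve hmax (l := nhdsWithin 1 (Set.Ioi 1))
        (c := fun t => pert PG e.1.1 e.1.2 t t⁻¹) (t0 := 1) nhdsWithin_le_nhds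
        (pert_contAt PG e.1.1 e.1.2 continuousAt_id (continuousAt_inv₀ one_ne_zero))
        (by simp only [inv_one]; exact pert_self hPG e.1.1 e.1.2) ?_ ?_
      · filter_upwards [Ioo_mem_nhdsGT_of_mem (Set.mem_Ico.mpr ⟨le_refl (1:ℝ), hM1⟩)]
          with t ht
        exact pert_mem hPG (ne_of_pair e) t⁻¹ (le_of_lt (lt_trans zero_lt_one ht.1))
      · filter_upwards [Ioo_mem_nhdsGT_of_mem (Set.mem_Ico.mpr ⟨le_refl (1:ℝ), hM1⟩)]
          with t ht
        have ht0 : 0 < t := lt_trans zero_lt_one ht.1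
        rw [C2_pert L hPG e t (by positivity) (Or.inl (mul_inv_cancel₀ ht0.ne'))]
        have hkey : η1 * (1 - t) * PG.1 e.1.1 e.1.2
              + η2 * (1 - t⁻¹) * ∑ k, |PG.2 k e.1.1 e.1.2|
            = (1 - t) * (η1 * PG.1 e.1.1 e.1.2
              - η2 * (∑ k, |PG.2 k e.1.1 e.1.2|) * t⁻¹) := by
          field_simp
          ring
        have htM : t < η2 * (∑ k, |PG.2 k e.1.1 e.1.2|) / (η1 * PG.1 e.1.1 e.1.2) :=
          lt_of_lt_of_le ht.2 (min_le_right _ _)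
        have h5 : η1 * PG.1 e.1.1 e.1.2 * t < η2 * ∑ k, |PG.2 k e.1.1 e.1.2| := by
          rw [mul_comm]
          exact (lt_div_iff₀ (by positivity)).mp htM
        have h6 : η1 * PG.1 e.1.1 e.1.2 < η2 * (∑ k, |PG.2 k e.1.1 e.1.2|) * t⁻¹ := by
          rw [← div_eq_mul_inv]
          exact (lt_div_iff₀ ht0).mpr h5
        nlinarith [mul_pos_of_neg_of_neg (sub_neg.mpr ht.1)
          (sub_neg.mpr h6), hkey]
    · -- η1 φ > η2 c : push t < 1
      set m := max (1/2 : ℝ) (η2 * (∑ k, |PG.2 k e.1.1 e.1.2|) / (η1 * PG.1 e.1.1 e.1.2))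
        with hm
      have hm1 : m < 1 := max_lt (by norm_num) ((div_lt_one (by positivity)).mpr hgt)
      refine contradiction_of_curve hmax (l := nhdsWithin 1 (Set.Iio 1))
        (c := fun t => pert PG e.1.1 e.1.2 t t⁻¹) (t0 := 1) nhdsWithin_le_nhds
        (pert_contAt PG e.1.1 e.1.2 continuousAt_id (continuousAt_inv₀ one_ne_zero))
        (by simp only [inv_one]; exact pert_self hPG e.1.1 e.1.2) ?_ ?_
      · filter_upwards [Ioo_mem_nhdsLT_of_mem (Set.mem_Ioc.mpr ⟨hm1, le_refl (1:ℝ)⟩)]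
          with t ht
        have ht0 : 0 < t := lt_of_lt_of_le (by positivity : (0:ℝ) < m) ht.1.le
        exact pert_mem hPG (ne_of_pair e) t⁻¹ ht0.le
      · filter_upwards [Ioo_mem_nhdsLT_of_mem (Set.mem_Ioc.mpr ⟨hm1, le_refl (1:ℝ)⟩)]
          with t ht
        have hm0 : (0:ℝ) < m := lt_of_lt_of_le (by norm_num) (le_max_left _ _)
        have ht0 : 0 < t := lt_trans hm0 ht.1
        rw [C2_pert L hPG e t (by positivity) (Or.inl (mul_inv_cancel₀ ht0.ne'))]
        have hkey : η1 * (1 - t) * PG.1 e.1.1 e.1.2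
              + η2 * (1 - t⁻¹) * ∑ k, |PG.2 k e.1.1 e.1.2|
            = (1 - t) * (η1 * PG.1 e.1.1 e.1.2
              - η2 * (∑ k, |PG.2 k e.1.1 e.1.2|) * t⁻¹) := by
          field_simp
          ring
        have htm : η2 * (∑ k, |PG.2 k e.1.1 e.1.2|) / (η1 * PG.1 e.1.1 e.1.2) < t :=
          lt_of_le_of_lt (le_max_right _ _) ht.1
        have h5 : η2 * ∑ k, |PG.2 k e.1.1 e.1.2| < η1 * PG.1 e.1.1 e.1.2 * t := by
          rw [mul_comm (η1 * PG.1 e.1.1 e.1.2) t]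
          exact (div_lt_iff₀ (by positivity)).mp htm
        have h6 : η2 * (∑ k, |PG.2 k e.1.1 e.1.2|) * t⁻¹ < η1 * PG.1 e.1.1 e.1.2 := by
          rw [← div_eq_mul_inv]
          exact (div_lt_iff₀ ht0).mpr h5
        nlinarith [mul_pos (sub_pos.mpr ht.2) (sub_pos.mpr h6), hkey]

end
end P21
namespace P21
noncomputable section
open Real Filter Finset Matrix Set

variable {p K : ℕ}

lemma converse_main {η1 η2 : ℝ} (h1 : 0 < η1) (h2 : 0 < η2)
    (L : (Fin K → Matrix (Fin p) (Fin p) ℝ) → ℝ) {PG : XX p K} (hPG : PG ∈ Dom2 p K)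
    (hmax : IsLocalMaxOn (C2 η1 η2 L) (Dom2 p K) PG) :
    thmap PG ∈ Dom1 p K ∧
      IsLocalMaxOn (C1 (2 * Real.sqrt (η1 * η2)) L) (Dom1 p K) (thmap PG) := by
  refine ⟨thmap_mem hPG, ?_⟩
  have hbalp : ∀ e : PairIdx p, η1 * PG.1 e.1.1 e.1.2 = η2 * ∑ k, |PG.2 k e.1.1 e.1.2| :=
    balance_at_max h1 h2 L hPG hmax
  have hbal : ∀ i j, i ≠ j → η1 * PG.1 i j = η2 * ∑ k, |PG.2 k i j| := by
    intro i j hij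
    rcases lt_or_gt_of_ne hij with h | h
    · exact hbalp ⟨(i, j), h⟩
    · have hb := hbalp ⟨(j, i), h⟩
      have hswap : ∀ k : Fin K, PG.2 k j i = PG.2 k i j := fun k => (hPG.2.2.2 k).apply i j
      rw [show PG.1 j i = PG.1 i j from hPG.1.apply i j] at hb
      simp only [hswap] at hb
      exact hb
  have hEq : C2 η1 η2 L PG = C1 (2 * Real.sqrt (η1 * η2)) L (thmap PG) :=
    C2_eq_C1 h1 h2 L hPG hbalp
  have hbpt : balPt η1 η2 (thmap PG) = PG := balPt_thmap_eq h1 h2 hPG hbal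
  have hT : Tendsto (balPt η1 η2) (nhdsWithin (thmap PG) (Dom1 p K))
      (nhdsWithin PG (Dom2 p K)) := by
    have := ((balPt_contAt h1 h2 (thmap PG)).continuousWithinAt
      (s := Dom1 p K)).tendsto_nhdsWithin (fun θ hθ => balPt_mem hθ)
    rwa [hbpt] at this
  have hev : ∀ᶠ θ in nhdsWithin (thmap PG) (Dom1 p K),
      C2 η1 η2 L (balPt η1 η2 θ) ≤ C2 η1 η2 L PG := hT.eventually hmax
  show ∀ᶠ θ in nhdsWithin (thmap PG) (Dom1 p K),
      C1 (2 * Real.sqrt (η1 * η2)) L θ ≤ C1 (2 * Real.sqrt (η1 * η2)) L (thmap PG)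
  filter_upwards [hev, eventually_mem_nhdsWithin] with θ hθ hθD
  have e1 : C2 η1 η2 L (balPt η1 η2 θ) = C1 (2 * Real.sqrt (η1 * η2)) L θ := by
    have := C2_eq_C1 h1 h2 L (balPt_mem hθD)
      (fun e => balPt_balanced h1 h2 θ (ne_of_pair e))
    rwa [thmap_balPt h1 h2 θ] at this
  calc C1 (2 * Real.sqrt (η1 * η2)) L θ
      = C2 η1 η2 L (balPt η1 η2 θ) := e1.symm
    _ ≤ C2 η1 η2 L PG := hθ
    _ = C1 (2 * Real.sqrt (η1 * η2)) L (thmap PG) := hEq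

end
end P21

/-- Equivalence of the two penalized criteria (Proposition 2.1): with `λ = 2√(η1 η2)`,
local maximizers of the single-parameter criterion `F_λ` over symmetric matrices correspond
to local maximizers of the two-parameter criterion `F_{η1,η2}` over the factorized
parameterization `Θ^{(k)} = Φ ⊙ Γ^{(k)}`, and conversely. -/
theorem stmt_0 (p K : ℕ) (hp : 1 ≤ p) (hK : 1 ≤ K) (nk : Fin K → ℕ)
    (x : ∀ k, Fin (nk k) → Fin p → Bool) (η1 η2 lam : ℝ) (hη1 : 0 < η1) (hη2 : 0 < η2)
    (hlam : lam = 2 * Real.sqrt (η1 * η2)) :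
    -- F_{η1,η2}, on pairs (Φ, (Γ^{(k)})_k), with Θ^{(k)} = Φ ⊙ Γ^{(k)}
    let F2 : Matrix (Fin p) (Fin p) ℝ × (Fin K → Matrix (Fin p) (Fin p) ℝ) → ℝ :=
      fun PG => (∑ k, pllMain (x k) (hprod PG.1 (PG.2 k)))
        - η1 * ∑ e : PairIdx p, PG.1 e.1.1 e.1.2
        - η2 * ∑ e : PairIdx p, ∑ k, |PG.2 k e.1.1 e.1.2|
    -- constraint set: Φ symmetric with nonnegative off-diagonal and unit diagonal,
    -- each Γ^{(k)} symmetric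
    let D2 : Set (Matrix (Fin p) (Fin p) ℝ × (Fin K → Matrix (Fin p) (Fin p) ℝ)) :=
      {PG | PG.1.IsSymm ∧ (∀ i j, i ≠ j → 0 ≤ PG.1 i j) ∧ (∀ i, PG.1 i i = 1) ∧
        ∀ k, (PG.2 k).IsSymm}
    -- F_λ on K-tuples of symmetric matrices
    let F1 : (Fin K → Matrix (Fin p) (Fin p) ℝ) → ℝ :=
      fun Θs => (∑ k, pllMain (x k) (Θs k))
        - lam * ∑ e : PairIdx p, Real.sqrt (∑ k, |Θs k e.1.1 e.1.2|)
    let D1 : Set (Fin K → Matrix (Fin p) (Fin p) ℝ) := {Θs | ∀ k, (Θs k).IsSymm}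
    -- forward direction
    (∀ θh, θh ∈ D1 → IsLocalMaxOn F1 D1 θh →
      ∃ PG ∈ D2, IsLocalMaxOn F2 D2 PG ∧ ∀ k, θh k = hprod PG.1 (PG.2 k)) ∧
    -- converse direction
    (∀ PG, PG ∈ D2 → IsLocalMaxOn F2 D2 PG →
      (fun k => hprod PG.1 (PG.2 k)) ∈ D1 ∧
        IsLocalMaxOn F1 D1 (fun k => hprod PG.1 (PG.2 k))) := by
  intro F2 D2 F1 D1
  subst hlam
  have hF2 : F2 = P21.C2 η1 η2 (fun Θs => ∑ k, pllMain (x k) (Θs k)) := rfl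
  have hD2 : D2 = P21.Dom2 p K := rfl
  have hF1 : F1 = P21.C1 (2 * Real.sqrt (η1 * η2))
      (fun Θs => ∑ k, pllMain (x k) (Θs k)) := rfl
  have hD1 : D1 = P21.Dom1 p K := rfl
  rw [hF2, hD2, hF1, hD1]
  constructor
  · intro θh hθ hmax
    exact P21.forward_main hη1 hη2 _ hθ hmax
  · intro PG hm hmax
    exact P21.converse_main hη1 hη2 _ hm hmax
end

section
/- Proposition A.2(i) (concentration of the minimum eigenvalue of the sample Fisher information). Fix a category k with n_k i.i.d. observations from the main-effect-free Ising distribution with true parameter θ̄^{(k)}, and assume condition (B): Λ_min(Q̄^{(k)}_{S_k,S_k}) ≥ τ_min. Then for any ε > 0, P( Λ_min(Q̂^{(k)}_{S_k,S_k}) ≤ τ_min − ε ) ≤ 2 exp( −(ε²/2)(n_k/q_k²) + 2 log q_k ). -/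
open Filter Finset Matrix

noncomputable section AuxProof

/-- The logistic function. -/
def lSig (t : ℝ) : ℝ := Real.exp t / (1 + Real.exp t)

/-- The derivative of the logistic function. -/
def lSig' (t : ℝ) : ℝ := Real.exp t / (1 + Real.exp t) ^ 2

lemma one_add_exp_pos (t : ℝ) : 0 < 1 + Real.exp t := by positivity

lemma lSig'_nonneg (t : ℝ) : 0 ≤ lSig' t := by unfold lSig'; positivity

lemma lSig'_le (t : ℝ) : lSig' t ≤ 1/4 := by
  unfold lSig'
  rw [div_le_iff₀ (by positivity)]
  nlinarith [sq_nonneg (1 - Real.exp t), Real.exp_pos t]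

lemma hasDerivAt_log1pexp (t : ℝ) :
    HasDerivAt (fun u => Real.log (1 + Real.exp u)) (lSig t) t := by
  simpa [lSig] using (((Real.hasDerivAt_exp t).const_add 1).log (ne_of_gt (one_add_exp_pos t)))

lemma hasDerivAt_lSig (t : ℝ) : HasDerivAt lSig (lSig' t) t := by
  have h := (Real.hasDerivAt_exp t).div ((Real.hasDerivAt_exp t).const_add 1)
    (ne_of_gt (one_add_exp_pos t))
  refine h.congr_deriv ?_
  unfold lSig'
  field_simp
  ring

lemma toR_nonneg (b : Bool) : 0 ≤ toR b := by unfold toR; split <;> norm_num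

lemma toR_le_one (b : Bool) : toR b ≤ 1 := by unfold toR; split <;> norm_num

lemma designMat_nonneg {p : ℕ} (x : Fin p → Bool) (j : Fin p) (e : PairIdx p) :
    0 ≤ designMat x j e := by
  unfold designMat
  simp only [Matrix.of_apply]
  split_ifs <;> first | exact toR_nonneg _ | norm_num

lemma designMat_le_one {p : ℕ} (x : Fin p → Bool) (j : Fin p) (e : PairIdx p) :
    designMat x j e ≤ 1 := by
  unfold designMat
  simp only [Matrix.of_apply]
  split_ifs <;> first | exact toR_le_one _ | norm_num

lemma designMat_eq_zero {p : ℕ} (x : Fin p → Bool) (j : Fin p) (e : PairIdx p)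
    (h1 : j ≠ e.1.1) (h2 : j ≠ e.1.2) : designMat x j e = 0 := by
  unfold designMat
  simp [h1, h2]

/-- `localField` as a linear form in `θ`. -/
lemma localField_eq {p : ℕ} (θ : PairIdx p → ℝ) (x : Fin p → Bool) (j : Fin p) :
    localField θ x j = ∑ e : PairIdx p, designMat x j e * θ e := by
  classical
  have hfil : ∑ e : PairIdx p, designMat x j e * θ e
      = ∑ e ∈ Finset.univ.filter (fun e : PairIdx p => j = e.1.1 ∨ j = e.1.2),
          designMat x j e * θ e := by
    refine (Finset.sum_filter_of_ne ?_).symm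
    intro e _ hne
    by_contra hc
    push_neg at hc
    exact hne (by rw [designMat_eq_zero x j e hc.1 hc.2, zero_mul])
  rw [hfil]
  unfold localField
  refine Finset.sum_bij' (fun j' hj' => ?_) (fun e he => if j = e.1.1 then e.1.2 else e.1.1)
    ?_ ?_ ?_ ?_ ?_
  · -- map j' to the pair {j, j'}
    exact if h : j < j' then ⟨(j, j'), h⟩ else
      ⟨(j', j), lt_of_le_of_ne (not_lt.mp h)
        (by simpa [eq_comm] using (Finset.mem_erase.mp hj').1)⟩
  · intro a ha
    simp only [Finset.mem_filter, Finset.mem_univ, true_and]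
    split
    · left; rfl
    · right; rfl
  · intro e he
    simp only [Finset.mem_filter, Finset.mem_univ, true_and] at he
    have hlt := e.2
    rcases he with h | h
    · simp only [if_pos h]
      refine Finset.mem_erase.mpr ⟨?_, Finset.mem_univ _⟩
      rw [h]; exact (ne_of_lt hlt).symm
    · have hne : j ≠ e.1.1 := by rw [h]; exact (ne_of_lt hlt).symm
      simp only [if_neg hne]
      refine Finset.mem_erase.mpr ⟨?_, Finset.mem_univ _⟩
      rw [h]; exact (ne_of_lt hlt)
  · intro a ha
    by_cases h : j < a
    · simp [h]
    · have : j ≠ a := by simpa [eq_comm] using (Finset.mem_erase.mp ha).1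
      simp [h, this]
  · intro e he
    simp only [Finset.mem_filter, Finset.mem_univ, true_and] at he
    have hlt := e.2
    rcases he with h | h
    · have h2 : j < e.1.2 := h ▸ hlt
      simp only [if_pos h, dif_pos h2]
      exact Subtype.ext (Prod.ext h rfl)
    · have hne : j ≠ e.1.1 := by rw [h]; exact (ne_of_lt hlt).symm
      have h2 : ¬ j < e.1.1 := by rw [h]; exact not_lt.mpr (le_of_lt hlt)
      simp only [if_neg hne, dif_neg h2]
      exact Subtype.ext (Prod.ext rfl h)
  · intro a ha
    have hne : j ≠ a := by simpa [eq_comm] using (Finset.mem_erase.mp ha).1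
    by_cases h : j < a
    · simp only [dif_pos h]
      unfold symExt designMat
      simp only [Matrix.of_apply, dif_pos h]
      simp [mul_comm]
    · have h' : a < j := lt_of_le_of_ne (not_lt.mp h) (by simpa [eq_comm] using hne)
      simp only [dif_neg h]
      unfold symExt designMat
      simp only [Matrix.of_apply, dif_neg h, dif_pos h']
      simp [hne, hne.symm, mul_comm]


/-- The local field, as a continuous linear map in `θ`. -/
def lfL {p : ℕ} (x : Fin p → Bool) (j : Fin p) : (PairIdx p → ℝ) →L[ℝ] ℝ :=
  ∑ e : PairIdx p, designMat x j e •
    (ContinuousLinearMap.proj (R := ℝ) (φ := fun _ : PairIdx p => ℝ) e)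

lemma lfL_apply {p : ℕ} (x : Fin p → Bool) (j : Fin p) (θ : PairIdx p → ℝ) :
    lfL x j θ = localField θ x j := by
  rw [localField_eq]
  simp [lfL, ContinuousLinearMap.sum_apply]

lemma lfL_single {p : ℕ} (x : Fin p → Bool) (j : Fin p) (e' : PairIdx p) :
    lfL x j (Pi.single e' 1) = designMat x j e' := by
  classical
  simp [lfL, ContinuousLinearMap.sum_apply, Pi.single_apply, mul_ite, mul_one, mul_zero,
    Finset.sum_ite_eq', Finset.mem_univ, if_true]

/-- Hessian entries of a generic pseudo-likelihood-shaped functional. -/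
lemma hess_formula {p : ℕ} {ι : Type*} [Fintype ι] (w c : ι → ℝ)
    (L : ι → (PairIdx p → ℝ) →L[ℝ] ℝ) (F : (PairIdx p → ℝ) → ℝ)
    (hF : ∀ θ, F θ = ∑ t, w t * (c t * L t θ - Real.log (1 + Real.exp (L t θ))))
    (θ : PairIdx p → ℝ) (e e' : PairIdx p) :
    hessAt F θ e e'
      = -∑ t, w t * lSig' (L t θ) * (L t (Pi.single e 1) * L t (Pi.single e' 1)) := by
  classical
  have hFf : F = fun θ => ∑ t, w t * (c t * L t θ - Real.log (1 + Real.exp (L t θ))) :=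
    funext hF
  have hD : ∀ θ0 : PairIdx p → ℝ,
      HasFDerivAt F (∑ t, (w t * (c t - lSig (L t θ0))) • L t) θ0 := by
    intro θ0
    rw [hFf]
    have hterm : ∀ t : ι,
        HasFDerivAt (fun θ => w t * (c t * L t θ - Real.log (1 + Real.exp (L t θ))))
          ((w t * (c t - lSig (L t θ0))) • L t) θ0 := by
      intro t
      have h1 : HasFDerivAt (fun θ => c t * L t θ) (c t • L t) θ0 :=
        (L t).hasFDerivAt.const_mul (c t)
      have h2 : HasFDerivAt (fun θ => Real.log (1 + Real.exp (L t θ)))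
          (lSig (L t θ0) • L t) θ0 :=
        (hasDerivAt_log1pexp (L t θ0)).comp_hasFDerivAt θ0 (L t).hasFDerivAt
      have h3 := (h1.sub h2).const_mul (w t)
      refine h3.congr_fderiv ?_
      ext u
      simp only [ContinuousLinearMap.smul_apply, ContinuousLinearMap.coe_smul',
        ContinuousLinearMap.coe_sub', Pi.smul_apply, Pi.sub_apply, smul_eq_mul]
      ring
    exact HasFDerivAt.fun_sum (fun t _ => hterm t)
  have hgrad : (fun θ0 => fderiv ℝ F θ0 (Pi.single e' 1))
      = fun θ0 => ∑ t, w t * (c t - lSig (L t θ0)) * L t (Pi.single e' 1) := by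
    funext θ0
    rw [(hD θ0).fderiv]
    simp [ContinuousLinearMap.sum_apply]
  have hG : HasFDerivAt
      (fun θ0 => ∑ t, w t * (c t - lSig (L t θ0)) * L t (Pi.single e' 1))
      (∑ t, (-(w t * lSig' (L t θ) * L t (Pi.single e' 1))) • L t) θ := by
    have hterm : ∀ t : ι,
        HasFDerivAt (fun θ0 => w t * (c t - lSig (L t θ0)) * L t (Pi.single e' 1))
          ((-(w t * lSig' (L t θ) * L t (Pi.single e' 1))) • L t) θ := by
      intro t
      have hs : HasFDerivAt (fun θ0 => lSig (L t θ0)) (lSig' (L t θ) • L t) θ :=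
        (hasDerivAt_lSig (L t θ)).comp_hasFDerivAt θ (L t).hasFDerivAt
      have h1 := ((hs.const_sub (c t)).const_mul (w t)).mul_const (L t (Pi.single e' 1))
      refine h1.congr_fderiv ?_
      ext u
      simp only [ContinuousLinearMap.smul_apply, ContinuousLinearMap.coe_smul',
        ContinuousLinearMap.coe_neg', Pi.smul_apply, Pi.neg_apply, smul_eq_mul]
      ring
    exact HasFDerivAt.fun_sum (fun t _ => hterm t)
  show fderiv ℝ (fun t0 => fderiv ℝ F t0 (Pi.single e' 1)) θ (Pi.single e 1) = _
  rw [hgrad, hG.fderiv]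
  simp only [ContinuousLinearMap.sum_apply, ContinuousLinearMap.smul_apply, smul_eq_mul]
  rw [← Finset.sum_neg_distrib]
  exact Finset.sum_congr rfl (fun t _ => by ring)


/-- Per-observation Fisher information entries. -/
def Hmat {p : ℕ} (x : Fin p → Bool) (θ : PairIdx p → ℝ) (e e' : PairIdx p) : ℝ :=
  ∑ j, lSig' (lfL x j θ) * (designMat x j e * designMat x j e')

lemma hess_pllOne {p : ℕ} (x : Fin p → Bool) (θ : PairIdx p → ℝ) (e e' : PairIdx p) :
    hessAt (pllOne x) θ e e' = -Hmat x θ e e' := by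
  have hF : ∀ θ0, pllOne x θ0 = ∑ j, (1:ℝ) *
      (toR (x j) * lfL x j θ0 - Real.log (1 + Real.exp (lfL x j θ0))) := by
    intro θ0
    unfold pllOne
    exact Finset.sum_congr rfl fun j _ => by rw [lfL_apply, one_mul]
  rw [hess_formula (fun _ : Fin p => (1:ℝ)) (fun j => toR (x j)) (fun j => lfL x j)
    (pllOne x) hF θ e e']
  unfold Hmat
  congr 1
  exact Finset.sum_congr rfl fun j _ => by rw [lfL_single, lfL_single, one_mul]

lemma hess_pll {p n : ℕ} (xs : Fin n → Fin p → Bool) (θ : PairIdx p → ℝ) (e e' : PairIdx p) :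
    hessAt (pll xs) θ e e' = -((n:ℝ)⁻¹ * ∑ i, Hmat (xs i) θ e e') := by
  have hF : ∀ θ0, pll xs θ0 = ∑ t : Fin n × Fin p, (n:ℝ)⁻¹ *
      (toR (xs t.1 t.2) * lfL (xs t.1) t.2 θ0
        - Real.log (1 + Real.exp (lfL (xs t.1) t.2 θ0))) := by
    intro θ0
    rw [Fintype.sum_prod_type]
    unfold pll pllOne
    rw [Finset.mul_sum]
    exact Finset.sum_congr rfl fun i _ => by
      rw [Finset.mul_sum]
      exact Finset.sum_congr rfl fun j _ => by rw [lfL_apply]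
  rw [hess_formula (fun _ : Fin n × Fin p => (n:ℝ)⁻¹) (fun t => toR (xs t.1 t.2))
    (fun t => lfL (xs t.1) t.2) (pll xs) hF θ e e']
  rw [Fintype.sum_prod_type]
  congr 1
  rw [Finset.mul_sum]
  exact Finset.sum_congr rfl fun i _ => by
    unfold Hmat
    rw [Finset.mul_sum]
    exact Finset.sum_congr rfl fun j _ => by rw [lfL_single, lfL_single]; ring

lemma Qhat_apply {p n : ℕ} (xs : Fin n → Fin p → Bool) (θ : PairIdx p → ℝ) (e e' : PairIdx p) :
    Qhat xs θ e e' = (n:ℝ)⁻¹ * ∑ i, Hmat (xs i) θ e e' := by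
  unfold Qhat
  rw [Matrix.neg_apply, hess_pll, neg_neg]

lemma Qpop_apply {p : ℕ} (θ : PairIdx p → ℝ) (e e' : PairIdx p) :
    Qpop θ e e' = ∑ x, isingPmf θ x * Hmat x θ e e' := by
  unfold Qpop
  rw [Matrix.neg_apply, Matrix.sum_apply, ← Finset.sum_neg_distrib]
  exact Finset.sum_congr rfl fun x _ => by
    rw [Matrix.smul_apply, hess_pllOne, smul_eq_mul]
    ring

lemma Hmat_nonneg {p : ℕ} (x : Fin p → Bool) (θ : PairIdx p → ℝ) (e e' : PairIdx p) :
    0 ≤ Hmat x θ e e' :=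
  Finset.sum_nonneg fun j _ => mul_nonneg (lSig'_nonneg _)
    (mul_nonneg (designMat_nonneg x j e) (designMat_nonneg x j e'))

lemma Hmat_le_one {p : ℕ} (x : Fin p → Bool) (θ : PairIdx p → ℝ) (e e' : PairIdx p) :
    Hmat x θ e e' ≤ 1 := by
  unfold Hmat
  have hterm : ∀ j : Fin p, lSig' (lfL x j θ) * (designMat x j e * designMat x j e')
      ≤ (if j = e.1.1 then (1:ℝ)/4 else 0) + (if j = e.1.2 then (1:ℝ)/4 else 0) := by
    intro j
    by_cases h1 : j = e.1.1
    · have hb : lSig' (lfL x j θ) * (designMat x j e * designMat x j e') ≤ 1/4 * 1 :=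
        mul_le_mul (lSig'_le _)
          (mul_le_one₀ (designMat_le_one x j e) (designMat_nonneg x j e') (designMat_le_one x j e'))
          (mul_nonneg (designMat_nonneg x j e) (designMat_nonneg x j e')) (by norm_num)
      have h2 : (0:ℝ) ≤ if j = e.1.2 then (1:ℝ)/4 else 0 := by positivity
      rw [if_pos h1]
      linarith
    · by_cases h2 : j = e.1.2
      · have hb : lSig' (lfL x j θ) * (designMat x j e * designMat x j e') ≤ 1/4 * 1 :=
          mul_le_mul (lSig'_le _)
            (mul_le_one₀ (designMat_le_one x j e) (designMat_nonneg x j e')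
              (designMat_le_one x j e'))
            (mul_nonneg (designMat_nonneg x j e) (designMat_nonneg x j e')) (by norm_num)
        rw [if_neg h1, if_pos h2]
        linarith
      · rw [designMat_eq_zero x j e h1 h2, if_neg h1, if_neg h2]
        simp
  calc ∑ j, lSig' (lfL x j θ) * (designMat x j e * designMat x j e')
      ≤ ∑ j : Fin p, ((if j = e.1.1 then (1:ℝ)/4 else 0) + (if j = e.1.2 then (1:ℝ)/4 else 0)) :=
        Finset.sum_le_sum fun j _ => hterm j
    _ ≤ 1 := by
        rw [Finset.sum_add_distrib, Finset.sum_ite_eq', Finset.sum_ite_eq']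
        simp
        norm_num

lemma isingPmf_nonneg {p : ℕ} (θ : PairIdx p → ℝ) (x : Fin p → Bool) : 0 ≤ isingPmf θ x := by
  unfold isingPmf
  have : (0:ℝ) < ∑ y : Fin p → Bool, Real.exp (isingEnergy θ y) :=
    Finset.sum_pos (fun y _ => Real.exp_pos _) Finset.univ_nonempty
  positivity

lemma isingPmf_sum {p : ℕ} (θ : PairIdx p → ℝ) : ∑ x : Fin p → Bool, isingPmf θ x = 1 := by
  unfold isingPmf
  rw [← Finset.sum_div]
  refine div_self (ne_of_gt ?_)
  exact Finset.sum_pos (fun y _ => Real.exp_pos _) Finset.univ_nonempty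


/-- Hoeffding's lemma on a finite probability space, for variables bounded by `1`. -/
lemma mgf_le {X : Type*} [Fintype X] (w : X → ℝ) (h0 : ∀ x, 0 ≤ w x)
    (h1 : ∑ x, w x = 1) (Z : X → ℝ) (hZ : ∀ x, |Z x| ≤ 1)
    (hmean : ∑ x, w x * Z x = 0) (t : ℝ) :
    ∑ x, w x * Real.exp (t * Z x) ≤ Real.exp (t ^ 2 / 2) := by
  have hpt : ∀ x, Real.exp (t * Z x)
      ≤ (1 - Z x)/2 * Real.exp (-t) + (1 + Z x)/2 * Real.exp t := by
    intro x
    have hz := abs_le.mp (hZ x)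
    have ha : (0:ℝ) ≤ (1 - Z x)/2 := by linarith
    have hb : (0:ℝ) ≤ (1 + Z x)/2 := by linarith
    have hab : (1 - Z x)/2 + (1 + Z x)/2 = 1 := by ring
    have hcv := convexOn_exp.2 (Set.mem_univ (-t)) (Set.mem_univ t) ha hb hab
    have harg : -((1 - Z x) / 2 * t) + (1 + Z x) / 2 * t = t * Z x := by ring
    simpa [smul_eq_mul, harg] using hcv
  calc ∑ x, w x * Real.exp (t * Z x)
      ≤ ∑ x, (w x * ((Real.exp (-t) + Real.exp t)/2)
          + (w x * Z x) * ((Real.exp t - Real.exp (-t))/2)) := by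
        refine Finset.sum_le_sum fun x _ => ?_
        calc w x * Real.exp (t * Z x)
            ≤ w x * ((1 - Z x)/2 * Real.exp (-t) + (1 + Z x)/2 * Real.exp t) :=
              mul_le_mul_of_nonneg_left (hpt x) (h0 x)
          _ = w x * ((Real.exp (-t) + Real.exp t)/2)
              + (w x * Z x) * ((Real.exp t - Real.exp (-t))/2) := by ring
    _ = (Real.exp (-t) + Real.exp t)/2 := by
        rw [Finset.sum_add_distrib, ← Finset.sum_mul, ← Finset.sum_mul, h1, hmean]
        ring
    _ ≤ Real.exp (t ^ 2 / 2) := by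
        have hc := Real.cosh_le_exp_half_sq t
        rw [Real.cosh_eq] at hc
        linarith

/-- Chernoff bound on a finite product space, for mean-zero variables bounded by `1`. -/
lemma chernoff {X : Type*} [Fintype X] (w : X → ℝ) (h0 : ∀ x, 0 ≤ w x)
    (h1 : ∑ x, w x = 1) (Z : X → ℝ) (hZ : ∀ x, |Z x| ≤ 1)
    (hmean : ∑ x, w x * Z x = 0) (n : ℕ) (t : ℝ) (ht : 0 ≤ t) :
    finProb (fun xs : Fin n → X => ∏ i, w (xs i))
      {xs | (n:ℝ) * t ≤ ∑ i, Z (xs i)} ≤ Real.exp (-(n:ℝ) * t ^ 2 / 2) := by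
  classical
  unfold finProb
  have hpt : ∀ xs : Fin n → X,
      Set.indicator {xs : Fin n → X | (n:ℝ)*t ≤ ∑ i, Z (xs i)}
        (fun xs => ∏ i, w (xs i)) xs
      ≤ Real.exp (-((n:ℝ) * t^2)) * ∏ i, (w (xs i) * Real.exp (t * Z (xs i))) := by
    intro xs
    by_cases hx : xs ∈ {xs : Fin n → X | (n:ℝ)*t ≤ ∑ i, Z (xs i)}
    · rw [Set.indicator_of_mem hx]
      have hW : 0 ≤ ∏ i, w (xs i) := Finset.prod_nonneg fun i _ => h0 _
      have hfac : ∏ i, (w (xs i) * Real.exp (t * Z (xs i)))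
          = (∏ i, w (xs i)) * Real.exp (t * ∑ i, Z (xs i)) := by
        rw [Finset.prod_mul_distrib, ← Real.exp_sum, Finset.mul_sum]
      have hxs : (n:ℝ)*t ≤ ∑ i, Z (xs i) := hx
      have hexp : (1:ℝ) ≤ Real.exp (-((n:ℝ) * t^2)) * Real.exp (t * ∑ i, Z (xs i)) := by
        rw [← Real.exp_add, ← Real.exp_zero]
        apply Real.exp_le_exp.mpr
        nlinarith [mul_le_mul_of_nonneg_left hxs ht]
      calc ∏ i, w (xs i) = (∏ i, w (xs i)) * 1 := (mul_one _).symm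
        _ ≤ (∏ i, w (xs i)) * (Real.exp (-((n:ℝ)*t^2)) * Real.exp (t * ∑ i, Z (xs i))) :=
            mul_le_mul_of_nonneg_left hexp hW
        _ = Real.exp (-((n:ℝ)*t^2)) * ∏ i, (w (xs i) * Real.exp (t * Z (xs i))) := by
            rw [hfac]; ring
    · rw [Set.indicator_of_notMem hx]
      exact mul_nonneg (Real.exp_pos _).le
        (Finset.prod_nonneg fun i _ => mul_nonneg (h0 _) (Real.exp_pos _).le)
  calc ∑ xs : Fin n → X, Set.indicator {xs : Fin n → X | (n:ℝ)*t ≤ ∑ i, Z (xs i)}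
          (fun xs => ∏ i, w (xs i)) xs
      ≤ ∑ xs : Fin n → X,
          Real.exp (-((n:ℝ) * t^2)) * ∏ i, (w (xs i) * Real.exp (t * Z (xs i))) :=
        Finset.sum_le_sum fun xs _ => hpt xs
    _ = Real.exp (-((n:ℝ) * t^2))
        * ∑ xs : Fin n → X, ∏ i, (w (xs i) * Real.exp (t * Z (xs i))) := by
        rw [Finset.mul_sum]
    _ ≤ Real.exp (-((n:ℝ) * t^2)) * Real.exp (t^2/2) ^ n := by
        refine mul_le_mul_of_nonneg_left ?_ (Real.exp_pos _).le
        have hps := Finset.prod_univ_sum (fun _ : Fin n => (Finset.univ : Finset X))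
          (fun _ x => w x * Real.exp (t * Z x))
        rw [Fintype.piFinset_univ] at hps
        rw [← hps]
        calc ∏ _i : Fin n, ∑ x, w x * Real.exp (t * Z x)
            ≤ ∏ _i : Fin n, Real.exp (t^2/2) :=
              Finset.prod_le_prod
                (fun _ _ => Finset.sum_nonneg fun x _ =>
                  mul_nonneg (h0 x) (Real.exp_pos _).le)
                (fun _ _ => mgf_le w h0 h1 Z hZ hmean t)
          _ = Real.exp (t^2/2) ^ n := by
              rw [Finset.prod_const, Finset.card_univ, Fintype.card_fin]
    _ = Real.exp (-(n:ℝ) * t ^ 2 / 2) := by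
        rw [← Real.exp_nat_mul, ← Real.exp_add]
        congr 1
        ring


lemma unit_abs_le_one {ι : Type*} [Fintype ι] (v : ι → ℝ) (hv : ∑ i, v i ^ 2 = 1) (i : ι) :
    |v i| ≤ 1 := by
  rw [← sq_le_one_iff_abs_le_one]
  calc v i ^ 2 ≤ ∑ j, v j ^ 2 :=
        Finset.single_le_sum (f := fun j => v j ^ 2) (fun j _ => sq_nonneg _) (Finset.mem_univ i)
    _ = 1 := hv

lemma rayleigh_abs_le {ι : Type*} [Fintype ι] (A : Matrix ι ι ℝ) (v : ι → ℝ)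
    (hv : ∑ i, v i ^ 2 = 1) :
    |v ⬝ᵥ A.mulVec v| ≤ ∑ i, ∑ j, |A i j| := by
  have hdv : v ⬝ᵥ A.mulVec v = ∑ i, v i * ∑ j, A i j * v j := by
    simp [dotProduct, Matrix.mulVec]
  rw [hdv]
  calc |∑ i, v i * ∑ j, A i j * v j| ≤ ∑ i, |v i * ∑ j, A i j * v j| :=
        Finset.abs_sum_le_sum_abs _ _
    _ ≤ ∑ i, ∑ j, |A i j| := by
        refine Finset.sum_le_sum fun i _ => ?_
        rw [abs_mul]
        calc |v i| * |∑ j, A i j * v j| ≤ 1 * ∑ j, |A i j * v j| :=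
              mul_le_mul (unit_abs_le_one v hv i) (Finset.abs_sum_le_sum_abs _ _)
                (abs_nonneg _) zero_le_one
          _ = ∑ j, |A i j * v j| := one_mul _
          _ ≤ ∑ j, |A i j| := by
              refine Finset.sum_le_sum fun j _ => ?_
              rw [abs_mul]
              calc |A i j| * |v j| ≤ |A i j| * 1 :=
                    mul_le_mul_of_nonneg_left (unit_abs_le_one v hv j) (abs_nonneg _)
                _ = |A i j| := mul_one _

lemma lamMin_bddBelow {ι : Type*} [Fintype ι] (A : Matrix ι ι ℝ) :
    BddBelow (Set.range fun v : {v : ι → ℝ // ∑ i, v i ^ 2 = 1} => v.1 ⬝ᵥ A.mulVec v.1) := by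
  refine ⟨-∑ i, ∑ j, |A i j|, ?_⟩
  rintro r ⟨v, rfl⟩
  have h := abs_le.mp (rayleigh_abs_le A v.1 v.2)
  linarith [h.1]

lemma lamMin_le {ι : Type*} [Fintype ι] (A : Matrix ι ι ℝ) (v : ι → ℝ)
    (hv : ∑ i, v i ^ 2 = 1) : lamMin A ≤ v ⬝ᵥ A.mulVec v :=
  ciInf_le (lamMin_bddBelow A) ⟨v, hv⟩

lemma le_lamMin {ι : Type*} [Fintype ι] [Nonempty {v : ι → ℝ // ∑ i, v i ^ 2 = 1}]
    (A : Matrix ι ι ℝ) (c : ℝ)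
    (h : ∀ v : ι → ℝ, ∑ i, v i ^ 2 = 1 → c ≤ v ⬝ᵥ A.mulVec v) : c ≤ lamMin A :=
  le_ciInf fun v => h v.1 v.2

lemma sphere_nonempty {ι : Type*} [Fintype ι] [DecidableEq ι] [Nonempty ι] :
    Nonempty {v : ι → ℝ // ∑ i, v i ^ 2 = 1} := by
  refine ⟨⟨Pi.single (Classical.arbitrary ι) 1, ?_⟩⟩
  simp [Pi.single_apply, ite_pow, Finset.sum_ite_eq']

lemma lamMin_of_empty {ι : Type*} [Fintype ι] [IsEmpty ι] (A : Matrix ι ι ℝ) :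
    lamMin A = 0 := by
  have hie : IsEmpty {v : ι → ℝ // ∑ i, v i ^ 2 = 1} := by
    refine ⟨fun v => ?_⟩
    have h := v.2
    simp at h
  rw [lamMin, @iInf_of_isEmpty _ _ _ hie, Real.sInf_empty]


lemma dot_mulVec_eq {ι : Type*} [Fintype ι] (A : Matrix ι ι ℝ) (v : ι → ℝ) :
    v ⬝ᵥ A.mulVec v = ∑ a, ∑ b, v a * A a b * v b := by
  simp only [dotProduct, Matrix.mulVec, Finset.mul_sum]
  exact Finset.sum_congr rfl fun a _ => Finset.sum_congr rfl fun b _ => by ring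

end AuxProof






set_option maxHeartbeats 2000000 in
/-- Proposition A.2(i): concentration of the minimum eigenvalue of the sample Fisher
information of a single category of i.i.d. Ising data. -/
theorem stmt_5 (p nkk : ℕ) (hp : 1 ≤ p) (hnk : 1 ≤ nkk)
    (θb : PairIdx p → ℝ) (τmin : ℝ) (hτmin : 0 < τmin)
    (condB : τmin ≤ lamMin (subm (Qpop θb) (suppF θb) (suppF θb)))
    (ε : ℝ) (hε : 0 < ε) :
    finProb (fun xs : Fin nkk → Fin p → Bool => ∏ i, isingPmf θb (xs i))
        {xs | lamMin (subm (Qhat xs θb) (suppF θb) (suppF θb)) ≤ τmin - ε}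
      ≤ 2 * Real.exp (-(ε ^ 2 / 2) * ((nkk : ℝ) / ((suppF θb).card : ℝ) ^ 2)
          + 2 * Real.log ((suppF θb).card : ℝ)) := by
  classical
  -- the support is nonempty
  have hq1 : 1 ≤ (suppF θb).card := by
    by_contra h
    push_neg at h
    have hc0 : (suppF θb).card = 0 := Nat.lt_one_iff.mp h
    haveI hie : IsEmpty ↥(suppF θb) := by
      rw [← Fintype.card_eq_zero_iff, Fintype.card_coe]
      exact hc0
    have h0 := lamMin_of_empty (subm (Qpop θb) (suppF θb) (suppF θb))
    rw [h0] at condB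
    linarith
  have hq0 : (0:ℝ) < ((suppF θb).card : ℝ) := by exact_mod_cast hq1
  obtain ⟨e0, he0⟩ := Finset.card_pos.mp hq1
  haveI hneS : Nonempty ↥(suppF θb) := ⟨⟨e0, he0⟩⟩
  haveI : Nonempty {v : ↥(suppF θb) → ℝ // ∑ i, v i ^ 2 = 1} := sphere_nonempty
  have hnpos : (0:ℝ) < (nkk:ℝ) := by exact_mod_cast hnk
  have hn0 : ((nkk:ℝ)) ≠ 0 := ne_of_gt hnpos
  have htpos : 0 < ε / ((suppF θb).card : ℝ) := div_pos hε hq0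
  -- basic facts about the mean matrix
  have hm0 : ∀ a b : PairIdx p, 0 ≤ Qpop θb a b := fun a b => by
    rw [Qpop_apply]
    exact Finset.sum_nonneg fun x _ =>
      mul_nonneg (isingPmf_nonneg θb x) (Hmat_nonneg x θb a b)
  have hm1 : ∀ a b : PairIdx p, Qpop θb a b ≤ 1 := fun a b => by
    rw [Qpop_apply]
    calc ∑ x, isingPmf θb x * Hmat x θb a b ≤ ∑ x, isingPmf θb x * 1 :=
          Finset.sum_le_sum fun x _ =>
            mul_le_mul_of_nonneg_left (Hmat_le_one x θb a b) (isingPmf_nonneg θb x)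
      _ = 1 := by simp [isingPmf_sum θb]
  have hZb : ∀ a b : PairIdx p, ∀ x, |Hmat x θb a b - Qpop θb a b| ≤ 1 := by
    intro a b x
    rw [abs_le]
    constructor
    · have := Hmat_nonneg x θb a b
      have := hm1 a b
      linarith
    · have := Hmat_le_one x θb a b
      have := hm0 a b
      linarith
  have hZm : ∀ a b : PairIdx p,
      ∑ x, isingPmf θb x * (Hmat x θb a b - Qpop θb a b) = 0 := by
    intro a b
    simp only [mul_sub]
    rw [Finset.sum_sub_distrib, ← Finset.sum_mul, isingPmf_sum θb, one_mul, Qpop_apply]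
    exact sub_self _
  -- Chernoff bounds for each entry and each sign
  have hch1 : ∀ a b : PairIdx p,
      finProb (fun xs : Fin nkk → Fin p → Bool => ∏ i, isingPmf θb (xs i))
        {xs | (nkk:ℝ) * (ε / ((suppF θb).card : ℝ))
          ≤ ∑ i, (Hmat (xs i) θb a b - Qpop θb a b)}
      ≤ Real.exp (-(nkk:ℝ) * (ε / ((suppF θb).card : ℝ)) ^ 2 / 2) := by
    intro a b
    exact chernoff (isingPmf θb) (isingPmf_nonneg θb) (isingPmf_sum θb)
      (fun x => Hmat x θb a b - Qpop θb a b) (hZb a b) (hZm a b) nkk _ htpos.le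
  have hch2 : ∀ a b : PairIdx p,
      finProb (fun xs : Fin nkk → Fin p → Bool => ∏ i, isingPmf θb (xs i))
        {xs | (nkk:ℝ) * (ε / ((suppF θb).card : ℝ))
          ≤ ∑ i, -(Hmat (xs i) θb a b - Qpop θb a b)}
      ≤ Real.exp (-(nkk:ℝ) * (ε / ((suppF θb).card : ℝ)) ^ 2 / 2) := by
    intro a b
    refine chernoff (isingPmf θb) (isingPmf_nonneg θb) (isingPmf_sum θb)
      (fun x => -(Hmat x θb a b - Qpop θb a b)) (fun x => by rw [abs_neg]; exact hZb a b x)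
      ?_ nkk _ htpos.le
    simp only [mul_neg, Finset.sum_neg_distrib, hZm a b, neg_zero]
  -- deterministic step: the event forces a large entry deviation
  have key : ∀ xs : Fin nkk → Fin p → Bool,
      lamMin (subm (Qhat xs θb) (suppF θb) (suppF θb)) ≤ τmin - ε →
      ∃ ab : ↥(suppF θb) × ↥(suppF θb),
        ((nkk:ℝ) * (ε / ((suppF θb).card : ℝ))
            ≤ ∑ i, (Hmat (xs i) θb ab.1.1 ab.2.1 - Qpop θb ab.1.1 ab.2.1)) ∨
        ((nkk:ℝ) * (ε / ((suppF θb).card : ℝ))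
            ≤ ∑ i, -(Hmat (xs i) θb ab.1.1 ab.2.1 - Qpop θb ab.1.1 ab.2.1)) := by
    intro xs hev
    by_contra hcon
    push_neg at hcon
    have hΔlt : ∀ ab : ↥(suppF θb) × ↥(suppF θb),
        |Qhat xs θb ab.1.1 ab.2.1 - Qpop θb ab.1.1 ab.2.1| < ε / ((suppF θb).card : ℝ) := by
      intro ab
      obtain ⟨h1, h2⟩ := hcon ab
      have hsum : ∑ i, (Hmat (xs i) θb ab.1.1 ab.2.1 - Qpop θb ab.1.1 ab.2.1)
          = (nkk:ℝ) * (Qhat xs θb ab.1.1 ab.2.1 - Qpop θb ab.1.1 ab.2.1) := by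
        rw [Qhat_apply, Finset.sum_sub_distrib, Finset.sum_const, Finset.card_univ,
          Fintype.card_fin, nsmul_eq_mul]
        field_simp
      rw [Finset.sum_neg_distrib, hsum] at h2
      rw [hsum] at h1
      rw [abs_lt]
      constructor
      · have := (mul_lt_mul_iff_right₀ hnpos).mp (by linarith :
          (nkk:ℝ) * (-(Qhat xs θb ab.1.1 ab.2.1 - Qpop θb ab.1.1 ab.2.1))
            < (nkk:ℝ) * (ε / ((suppF θb).card : ℝ)))
        linarith
      · exact (mul_lt_mul_iff_right₀ hnpos).mp h1
    have hSSne : (Finset.univ : Finset (↥(suppF θb) × ↥(suppF θb))).Nonempty :=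
      Finset.univ_nonempty
    obtain ⟨ab0, hab0⟩ := hSSne
    set M := Finset.univ.sup' ⟨ab0, hab0⟩
      (fun ab : ↥(suppF θb) × ↥(suppF θb) =>
        |Qhat xs θb ab.1.1 ab.2.1 - Qpop θb ab.1.1 ab.2.1|) with hM
    have hMlt : M < ε / ((suppF θb).card : ℝ) :=
      (Finset.sup'_lt_iff ⟨ab0, hab0⟩).mpr fun ab _ => hΔlt ab
    have hM0 : 0 ≤ M := le_trans (abs_nonneg _)
      (Finset.le_sup' (fun ab : ↥(suppF θb) × ↥(suppF θb) =>
        |Qhat xs θb ab.1.1 ab.2.1 - Qpop θb ab.1.1 ab.2.1|) hab0)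
    have hMb : ∀ ab : ↥(suppF θb) × ↥(suppF θb),
        |Qhat xs θb ab.1.1 ab.2.1 - Qpop θb ab.1.1 ab.2.1| ≤ M :=
      fun ab => Finset.le_sup' (fun ab : ↥(suppF θb) × ↥(suppF θb) =>
        |Qhat xs θb ab.1.1 ab.2.1 - Qpop θb ab.1.1 ab.2.1|) (Finset.mem_univ ab)
    have hstep : τmin - ((suppF θb).card : ℝ) * M
        ≤ lamMin (subm (Qhat xs θb) (suppF θb) (suppF θb)) := by
      refine le_lamMin _ _ (fun v hv => ?_)
      have hQbar : τmin ≤ v ⬝ᵥ (subm (Qpop θb) (suppF θb) (suppF θb)).mulVec v :=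
        le_trans condB (lamMin_le _ v hv)
      have hsplit : v ⬝ᵥ (subm (Qhat xs θb) (suppF θb) (suppF θb)).mulVec v
          = v ⬝ᵥ (subm (Qpop θb) (suppF θb) (suppF θb)).mulVec v
            + ∑ a, ∑ b, v a * (Qhat xs θb a.1 b.1 - Qpop θb a.1 b.1) * v b := by
        rw [dot_mulVec_eq, dot_mulVec_eq, ← Finset.sum_add_distrib]
        refine Finset.sum_congr rfl fun a _ => ?_
        rw [← Finset.sum_add_distrib]
        refine Finset.sum_congr rfl fun b _ => ?_
        unfold subm
        simp only [Matrix.submatrix_apply]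
        ring
      have hsum_eq : M * ((∑ a : ↥(suppF θb), |v a|) * (∑ b : ↥(suppF θb), |v b|))
          = ∑ a, ∑ b, |v a| * M * |v b| := by
        rw [Finset.sum_mul_sum, Finset.mul_sum]
        refine Finset.sum_congr rfl fun a _ => ?_
        rw [Finset.mul_sum]
        exact Finset.sum_congr rfl fun b _ => by ring
      have hCS : (∑ a : ↥(suppF θb), |v a|) * (∑ b : ↥(suppF θb), |v b|)
          ≤ ((suppF θb).card : ℝ) := by
        have h1 := sq_sum_le_card_mul_sum_sq
          (s := (Finset.univ : Finset ↥(suppF θb))) (f := fun a => |v a|)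
        rw [← sq]
        calc (∑ a : ↥(suppF θb), |v a|) ^ 2
            ≤ (Finset.univ : Finset ↥(suppF θb)).card * ∑ a : ↥(suppF θb), |v a| ^ 2 := h1
          _ = ((suppF θb).card : ℝ) := by
              rw [Finset.card_univ, Fintype.card_coe]
              have hvv : ∑ a : ↥(suppF θb), |v a| ^ 2 = 1 := by
                rw [← hv]
                exact Finset.sum_congr rfl fun a _ => sq_abs _
              rw [hvv, mul_one]
      have habs : |∑ a, ∑ b, v a * (Qhat xs θb a.1 b.1 - Qpop θb a.1 b.1) * v b|
          ≤ ((suppF θb).card : ℝ) * M := by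
        calc |∑ a, ∑ b, v a * (Qhat xs θb a.1 b.1 - Qpop θb a.1 b.1) * v b|
            ≤ ∑ a, |∑ b, v a * (Qhat xs θb a.1 b.1 - Qpop θb a.1 b.1) * v b| :=
              Finset.abs_sum_le_sum_abs _ _
          _ ≤ ∑ a, ∑ b, |v a * (Qhat xs θb a.1 b.1 - Qpop θb a.1 b.1) * v b| :=
              Finset.sum_le_sum fun a _ => Finset.abs_sum_le_sum_abs _ _
          _ ≤ ∑ a, ∑ b, |v a| * M * |v b| := by
              refine Finset.sum_le_sum fun a _ => Finset.sum_le_sum fun b _ => ?_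
              rw [abs_mul, abs_mul]
              refine mul_le_mul_of_nonneg_right ?_ (abs_nonneg _)
              exact mul_le_mul_of_nonneg_left (hMb (a, b)) (abs_nonneg _)
          _ = M * ((∑ a : ↥(suppF θb), |v a|) * (∑ b : ↥(suppF θb), |v b|)) := hsum_eq.symm
          _ ≤ ((suppF θb).card : ℝ) * M := by
              rw [mul_comm]
              exact mul_le_mul_of_nonneg_right hCS hM0
      have hab := abs_le.mp habs
      rw [hsplit]
      linarith [hab.1]
    have hfin : τmin - ε < lamMin (subm (Qhat xs θb) (suppF θb) (suppF θb)) := by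
      refine lt_of_lt_of_le ?_ hstep
      have hqm : ((suppF θb).card : ℝ) * M < ((suppF θb).card : ℝ)
          * (ε / ((suppF θb).card : ℝ)) := (mul_lt_mul_iff_right₀ hq0).mpr hMlt
      rw [mul_div_cancel₀ _ (ne_of_gt hq0)] at hqm
      linarith
    exact absurd hev (not_le.mpr hfin)
  -- union bound
  have hWnn : ∀ xs : Fin nkk → Fin p → Bool, 0 ≤ ∏ i, isingPmf θb (xs i) :=
    fun xs => Finset.prod_nonneg fun i _ => isingPmf_nonneg θb (xs i)
  have hindnn : ∀ (E : Set (Fin nkk → Fin p → Bool)) (xs : Fin nkk → Fin p → Bool),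
      0 ≤ Set.indicator E (fun xs => ∏ i, isingPmf θb (xs i)) xs :=
    fun E xs => Set.indicator_nonneg (fun a _ => hWnn a) xs
  have hpw : ∀ xs : Fin nkk → Fin p → Bool,
      Set.indicator {xs | lamMin (subm (Qhat xs θb) (suppF θb) (suppF θb)) ≤ τmin - ε}
        (fun xs => ∏ i, isingPmf θb (xs i)) xs
      ≤ ∑ ab : ↥(suppF θb) × ↥(suppF θb),
          (Set.indicator {xs | (nkk:ℝ) * (ε / ((suppF θb).card : ℝ))
              ≤ ∑ i, (Hmat (xs i) θb ab.1.1 ab.2.1 - Qpop θb ab.1.1 ab.2.1)}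
            (fun xs => ∏ i, isingPmf θb (xs i)) xs
          + Set.indicator {xs | (nkk:ℝ) * (ε / ((suppF θb).card : ℝ))
              ≤ ∑ i, -(Hmat (xs i) θb ab.1.1 ab.2.1 - Qpop θb ab.1.1 ab.2.1)}
            (fun xs => ∏ i, isingPmf θb (xs i)) xs) := by
    intro xs
    by_cases hxs : xs ∈ {xs : Fin nkk → Fin p → Bool |
        lamMin (subm (Qhat xs θb) (suppF θb) (suppF θb)) ≤ τmin - ε}
    · rw [Set.indicator_of_mem hxs]
      obtain ⟨ab, hor⟩ := key xs hxs
      have hone : ∏ i, isingPmf θb (xs i)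
          ≤ Set.indicator {xs | (nkk:ℝ) * (ε / ((suppF θb).card : ℝ))
              ≤ ∑ i, (Hmat (xs i) θb ab.1.1 ab.2.1 - Qpop θb ab.1.1 ab.2.1)}
            (fun xs => ∏ i, isingPmf θb (xs i)) xs
          + Set.indicator {xs | (nkk:ℝ) * (ε / ((suppF θb).card : ℝ))
              ≤ ∑ i, -(Hmat (xs i) θb ab.1.1 ab.2.1 - Qpop θb ab.1.1 ab.2.1)}
            (fun xs => ∏ i, isingPmf θb (xs i)) xs := by
        rcases hor with h | h
        · have hmem : xs ∈ {xs : Fin nkk → Fin p → Bool |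
              (nkk:ℝ) * (ε / ((suppF θb).card : ℝ))
              ≤ ∑ i, (Hmat (xs i) θb ab.1.1 ab.2.1 - Qpop θb ab.1.1 ab.2.1)} := h
          rw [Set.indicator_of_mem hmem]
          have h2 := hindnn {xs | (nkk:ℝ) * (ε / ((suppF θb).card : ℝ))
              ≤ ∑ i, -(Hmat (xs i) θb ab.1.1 ab.2.1 - Qpop θb ab.1.1 ab.2.1)} xs
          linarith
        · have hmem : xs ∈ {xs : Fin nkk → Fin p → Bool |
              (nkk:ℝ) * (ε / ((suppF θb).card : ℝ))
              ≤ ∑ i, -(Hmat (xs i) θb ab.1.1 ab.2.1 - Qpop θb ab.1.1 ab.2.1)} := h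
          rw [Set.indicator_of_mem hmem]
          have h2 := hindnn {xs | (nkk:ℝ) * (ε / ((suppF θb).card : ℝ))
              ≤ ∑ i, (Hmat (xs i) θb ab.1.1 ab.2.1 - Qpop θb ab.1.1 ab.2.1)} xs
          linarith
      refine le_trans hone (Finset.single_le_sum
        (f := fun ab : ↥(suppF θb) × ↥(suppF θb) =>
          Set.indicator {xs | (nkk:ℝ) * (ε / ((suppF θb).card : ℝ))
              ≤ ∑ i, (Hmat (xs i) θb ab.1.1 ab.2.1 - Qpop θb ab.1.1 ab.2.1)}
            (fun xs => ∏ i, isingPmf θb (xs i)) xs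
          + Set.indicator {xs | (nkk:ℝ) * (ε / ((suppF θb).card : ℝ))
              ≤ ∑ i, -(Hmat (xs i) θb ab.1.1 ab.2.1 - Qpop θb ab.1.1 ab.2.1)}
            (fun xs => ∏ i, isingPmf θb (xs i)) xs)
        (fun ab' _ => ?_) (Finset.mem_univ ab))
      exact add_nonneg (hindnn _ xs) (hindnn _ xs)
    · rw [Set.indicator_of_notMem hxs]
      exact Finset.sum_nonneg fun ab _ => add_nonneg (hindnn _ xs) (hindnn _ xs)
  -- put everything together
  calc finProb (fun xs : Fin nkk → Fin p → Bool => ∏ i, isingPmf θb (xs i))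
        {xs | lamMin (subm (Qhat xs θb) (suppF θb) (suppF θb)) ≤ τmin - ε}
      ≤ ∑ xs : Fin nkk → Fin p → Bool, ∑ ab : ↥(suppF θb) × ↥(suppF θb),
          (Set.indicator {xs | (nkk:ℝ) * (ε / ((suppF θb).card : ℝ))
              ≤ ∑ i, (Hmat (xs i) θb ab.1.1 ab.2.1 - Qpop θb ab.1.1 ab.2.1)}
            (fun xs => ∏ i, isingPmf θb (xs i)) xs
          + Set.indicator {xs | (nkk:ℝ) * (ε / ((suppF θb).card : ℝ))
              ≤ ∑ i, -(Hmat (xs i) θb ab.1.1 ab.2.1 - Qpop θb ab.1.1 ab.2.1)}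
            (fun xs => ∏ i, isingPmf θb (xs i)) xs) := by
        unfold finProb
        exact Finset.sum_le_sum fun xs _ => hpw xs
    _ = ∑ ab : ↥(suppF θb) × ↥(suppF θb),
          (finProb (fun xs : Fin nkk → Fin p → Bool => ∏ i, isingPmf θb (xs i))
            {xs | (nkk:ℝ) * (ε / ((suppF θb).card : ℝ))
              ≤ ∑ i, (Hmat (xs i) θb ab.1.1 ab.2.1 - Qpop θb ab.1.1 ab.2.1)}
          + finProb (fun xs : Fin nkk → Fin p → Bool => ∏ i, isingPmf θb (xs i))
            {xs | (nkk:ℝ) * (ε / ((suppF θb).card : ℝ))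
              ≤ ∑ i, -(Hmat (xs i) θb ab.1.1 ab.2.1 - Qpop θb ab.1.1 ab.2.1)}) := by
        rw [Finset.sum_comm]
        refine Finset.sum_congr rfl fun ab _ => ?_
        unfold finProb
        rw [Finset.sum_add_distrib]
    _ ≤ ∑ _ab : ↥(suppF θb) × ↥(suppF θb),
          (Real.exp (-(nkk:ℝ) * (ε / ((suppF θb).card : ℝ)) ^ 2 / 2)
            + Real.exp (-(nkk:ℝ) * (ε / ((suppF θb).card : ℝ)) ^ 2 / 2)) :=
        Finset.sum_le_sum fun ab _ =>
          add_le_add (hch1 ab.1.1 ab.2.1) (hch2 ab.1.1 ab.2.1)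
    _ = (((suppF θb).card : ℝ) * ((suppF θb).card : ℝ))
        * (2 * Real.exp (-(nkk:ℝ) * (ε / ((suppF θb).card : ℝ)) ^ 2 / 2)) := by
        rw [Finset.sum_const, Finset.card_univ, Fintype.card_prod, Fintype.card_coe,
          nsmul_eq_mul, Nat.cast_mul]
        ring
    _ = 2 * Real.exp (-(ε ^ 2 / 2) * ((nkk : ℝ) / ((suppF θb).card : ℝ) ^ 2)
          + 2 * Real.log ((suppF θb).card : ℝ)) := by
        rw [Real.exp_add]
        have hlog : Real.exp (2 * Real.log ((suppF θb).card : ℝ))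
            = ((suppF θb).card : ℝ) * ((suppF θb).card : ℝ) := by
          rw [two_mul, Real.exp_add, Real.exp_log hq0]
        rw [hlog]
        have hexp : (-(nkk:ℝ) * (ε / ((suppF θb).card : ℝ)) ^ 2 / 2)
            = -(ε ^ 2 / 2) * ((nkk : ℝ) / ((suppF θb).card : ℝ) ^ 2) := by
          field_simp
        rw [hexp]
        ring
end

section
/- Lemma A.3 (Hessian Lipschitz-type remainder bound). In the sequence-of-problems setting with i.i.d. Ising data, suppose the sample condition Λ_max(Û^{(k)}_{S_k,S_k}) ≤ τ_max holds. Then, with probability tending to one, for every α_k ∈ [0,1] and every perturbation δ̲^{(k)} ∈ ℝ^{p(p−1)/2} supported on S_k, ‖[∇² l_k(θ̄^{(k)} + α_k δ̲^{(k)}) − ∇² l_k(θ̄^{(k)})] δ̲^{(k)}‖_∞ ≤ τ_max ‖δ̲^{(k)}‖_2². -/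
open Filter Finset Matrix

section LemmaA3Aux
open Finset
namespace LemA3

/-! ### Logistic function calculus -/

noncomputable def sigA (u : ℝ) : ℝ := Real.exp u / (1 + Real.exp u)
noncomputable def sigB (u : ℝ) : ℝ := Real.exp u / (1 + Real.exp u) ^ 2

lemma onePexp_pos (u : ℝ) : 0 < 1 + Real.exp u := by positivity

lemma hasDerivAt_phi (u : ℝ) :
    HasDerivAt (fun v => Real.log (1 + Real.exp v)) (sigA u) u := by
  have h : HasDerivAt (fun v : ℝ => 1 + Real.exp v) (Real.exp u) u :=
    (Real.hasDerivAt_exp u).const_add 1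
  simpa [sigA] using h.log (onePexp_pos u).ne'

lemma hasDerivAt_sigA (u : ℝ) : HasDerivAt sigA (sigB u) u := by
  have h : HasDerivAt (fun v : ℝ => 1 + Real.exp v) (Real.exp u) u :=
    (Real.hasDerivAt_exp u).const_add 1
  have := (Real.hasDerivAt_exp u).div h (onePexp_pos u).ne'
  refine this.congr_deriv ?_
  have hne := (onePexp_pos u).ne'
  unfold sigB
  field_simp
  ring

lemma hasDerivAt_sigB (u : ℝ) :
    HasDerivAt sigB (Real.exp u * (1 - Real.exp u) / (1 + Real.exp u) ^ 3) u := by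
  have h : HasDerivAt (fun v : ℝ => 1 + Real.exp v) (Real.exp u) u :=
    (Real.hasDerivAt_exp u).const_add 1
  have h2 : HasDerivAt (fun v : ℝ => (1 + Real.exp v) ^ 2)
      (2 * (1 + Real.exp u) ^ 1 * Real.exp u) u := h.pow 2
  have := (Real.hasDerivAt_exp u).div h2 (by positivity : ((1 + Real.exp u) ^ 2 : ℝ) ≠ 0)
  refine this.congr_deriv ?_
  have hne := (onePexp_pos u).ne'
  field_simp
  ring

lemma sigB_lip (a b : ℝ) : |sigB a - sigB b| ≤ |a - b| := by
  have := convex_univ.norm_image_sub_le_of_norm_deriv_le (f := sigB) (C := 1)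
    (fun x _ => (hasDerivAt_sigB x).differentiableAt)
    (fun x _ => by
      rw [(hasDerivAt_sigB x).deriv]
      have hE := Real.exp_pos x
      rw [Real.norm_eq_abs, abs_div, abs_of_pos (by positivity : (0:ℝ) < (1 + Real.exp x) ^ 3),
        div_le_one (by positivity)]
      rw [abs_mul, abs_of_pos hE]
      have h1 : |1 - Real.exp x| ≤ 1 + Real.exp x :=
        abs_le.2 ⟨by linarith, by linarith⟩
      nlinarith [h1, sq_nonneg (1 + Real.exp x)])
    (Set.mem_univ b) (Set.mem_univ a)
  simpa [Real.norm_eq_abs] using this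

/-! ### The linear local field and its relation to the design matrix -/

variable {p : ℕ}

noncomputable def lin (x : Fin p → Bool) (j : Fin p) (θ : PairIdx p → ℝ) : ℝ :=
  ∑ e : PairIdx p, designMat x j e * θ e

lemma toR_abs_le (b : Bool) : |toR b| ≤ 1 := by cases b <;> simp [toR]

lemma designMat_abs_le (x : Fin p → Bool) (j : Fin p) (e : PairIdx p) :
    |designMat x j e| ≤ 1 := by
  unfold designMat
  simp only [Matrix.of_apply]
  split_ifs <;> simp [toR_abs_le]

lemma localField_eq (θ : PairIdx p → ℝ) (x : Fin p → Bool) (j : Fin p) :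
    localField θ x j = lin x j θ := by
  classical
  unfold localField lin
  rw [← Finset.sum_filter_of_ne
    (p := fun e : PairIdx p => e.1.1 = j ∨ e.1.2 = j)
    (f := fun e : PairIdx p => designMat x j e * θ e)
    (by
      intro e _ hne
      by_contra hc
      push_neg at hc
      apply hne
      unfold designMat
      simp only [Matrix.of_apply]
      rw [if_neg (fun h => hc.1 h.symm), if_neg (fun h => hc.2 h.symm)]
      ring)]
  refine Finset.sum_bij' (fun a ha => if h : j < a then (⟨(j, a), h⟩ : PairIdx p)
      else ⟨(a, j), lt_of_le_of_ne (not_lt.1 h) (Finset.ne_of_mem_erase ha)⟩)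
    (fun e he => if e.1.1 = j then e.1.2 else e.1.1) ?_ ?_ ?_ ?_ ?_
  · intro a ha
    by_cases h : j < a <;> simp [h, Finset.mem_filter]
  · intro e he
    simp only [Finset.mem_filter, Finset.mem_univ, true_and] at he
    have hlt := e.2
    rcases he with h1 | h2
    · rw [if_pos h1]
      exact Finset.mem_erase.2 ⟨fun hh => hlt.ne' (hh.trans h1.symm), Finset.mem_univ _⟩
    · by_cases h1 : e.1.1 = j
      · rw [if_pos h1]
        refine Finset.mem_erase.2 ⟨fun hh => ?_, Finset.mem_univ _⟩
        exact absurd (h1 ▸ hh : e.1.2 = e.1.1) hlt.ne'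
      · rw [if_neg h1]
        exact Finset.mem_erase.2 ⟨h1, Finset.mem_univ _⟩
  · intro a ha
    by_cases h : j < a
    · simp [h]
    · simp [h, Finset.ne_of_mem_erase ha]
  · intro e he
    simp only [Finset.mem_filter, Finset.mem_univ, true_and] at he
    have hlt := e.2
    by_cases h1 : e.1.1 = j
    · have hif : (if e.1.1 = j then e.1.2 else e.1.1) = e.1.2 := if_pos h1
      have hj2 : j < e.1.2 := h1 ▸ hlt
      simp only [hif]
      rw [dif_pos hj2]
      exact Subtype.ext (Prod.ext h1.symm rfl)
    · have hif : (if e.1.1 = j then e.1.2 else e.1.1) = e.1.1 := if_neg h1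
      have h2 : e.1.2 = j := he.resolve_left h1
      have hnot : ¬ j < e.1.1 := not_lt.2 (h2 ▸ hlt.le)
      simp only [hif]
      rw [dif_neg hnot]
      exact Subtype.ext (Prod.ext rfl h2.symm)
  · intro a ha
    by_cases h : j < a
    · rw [dif_pos h]
      unfold symExt designMat
      simp only [Matrix.of_apply]
      rw [dif_pos h]
      simp only [if_true, eq_self_iff_true]
      ring
    · rw [dif_neg h]
      have hlt : a < j := lt_of_le_of_ne (not_lt.1 h) (Finset.ne_of_mem_erase ha)
      unfold symExt designMat
      simp only [Matrix.of_apply]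
      rw [dif_neg h, dif_pos hlt, if_neg (fun hh : j = a => hlt.ne' hh)]
      simp only [if_true, eq_self_iff_true]
      ring

lemma lin_add_smul (x : Fin p → Bool) (j : Fin p) (θ δ : PairIdx p → ℝ) (α : ℝ) :
    lin x j (θ + α • δ) = lin x j θ + α * lin x j δ := by
  unfold lin
  rw [Finset.mul_sum, ← Finset.sum_add_distrib]
  refine Finset.sum_congr rfl fun e _ => ?_
  simp only [Pi.add_apply, Pi.smul_apply, smul_eq_mul]
  ring

/-! ### Derivatives of the pseudo-log-likelihood -/

noncomputable def Fclm (x : Fin p → Bool) (j : Fin p) : (PairIdx p → ℝ) →L[ℝ] ℝ :=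
  ∑ e : PairIdx p, designMat x j e • ContinuousLinearMap.proj e

lemma Fclm_apply (x : Fin p → Bool) (j : Fin p) (v : PairIdx p → ℝ) :
    Fclm x j v = lin x j v := by
  simp [Fclm, lin, ContinuousLinearMap.sum_apply, ContinuousLinearMap.smul_apply,
    ContinuousLinearMap.proj_apply, smul_eq_mul]

lemma hasFDerivAt_lin (x : Fin p → Bool) (j : Fin p) (θ : PairIdx p → ℝ) :
    HasFDerivAt (lin x j) (Fclm x j) θ := by
  have h : lin x j = ⇑(Fclm x j) := funext fun v => (Fclm_apply x j v).symm
  rw [h]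
  exact (Fclm x j).hasFDerivAt

lemma Fclm_single (x : Fin p → Bool) (j : Fin p) (e : PairIdx p) :
    Fclm x j (Pi.single e 1) = designMat x j e := by
  classical
  rw [Fclm_apply]
  unfold lin
  rw [Finset.sum_eq_single e]
  · simp
  · intro b _ hb
    simp [Pi.single_apply, hb]
  · simp

variable {n : ℕ}

lemma pll_eq (x : Fin n → Fin p → Bool) : pll x = fun θ =>
    (n : ℝ)⁻¹ * ∑ i, ∑ j, (toR (x i j) * lin (x i) j θ
      - Real.log (1 + Real.exp (lin (x i) j θ))) := by
  funext θ
  unfold pll pllOne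
  simp only [localField_eq]

lemma hasFDerivAt_pll (x : Fin n → Fin p → Bool) (θ : PairIdx p → ℝ) :
    HasFDerivAt (pll x)
      ((n : ℝ)⁻¹ • ∑ i, ∑ j, (toR (x i j) - sigA (lin (x i) j θ)) • Fclm (x i) j) θ := by
  rw [pll_eq]
  have hterm : ∀ i j, HasFDerivAt
      (fun t => toR (x i j) * lin (x i) j t - Real.log (1 + Real.exp (lin (x i) j t)))
      ((toR (x i j) - sigA (lin (x i) j θ)) • Fclm (x i) j) θ := by
    intro i j
    have h1 := (hasFDerivAt_lin (x i) j θ).const_mul (toR (x i j))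
    have h2 := (hasDerivAt_phi (lin (x i) j θ)).comp_hasFDerivAt θ (hasFDerivAt_lin (x i) j θ)
    have heq : (toR (x i j) - sigA (lin (x i) j θ)) • Fclm (x i) j
        = toR (x i j) • Fclm (x i) j - sigA (lin (x i) j θ) • Fclm (x i) j := by
      ext v
      simp only [ContinuousLinearMap.sub_apply, ContinuousLinearMap.smul_apply, smul_eq_mul]
      ring
    rw [heq]
    exact h1.sub h2
  exact (HasFDerivAt.fun_sum fun i _ => HasFDerivAt.fun_sum fun j _ => hterm i j).const_mul _

lemma fderiv_pll_single (x : Fin n → Fin p → Bool) (θ : PairIdx p → ℝ) (e' : PairIdx p) :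
    fderiv ℝ (pll x) θ (Pi.single e' 1)
      = (n : ℝ)⁻¹ * ∑ i, ∑ j, (toR (x i j) - sigA (lin (x i) j θ)) * designMat (x i) j e' := by
  rw [(hasFDerivAt_pll x θ).fderiv]
  simp [ContinuousLinearMap.sum_apply, ContinuousLinearMap.smul_apply, Fclm_single,
    smul_eq_mul]

lemma hasFDerivAt_grad (x : Fin n → Fin p → Bool) (e' : PairIdx p) (θ : PairIdx p → ℝ) :
    HasFDerivAt (fun t => fderiv ℝ (pll x) t (Pi.single e' 1))
      ((n : ℝ)⁻¹ • ∑ i, ∑ j,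
        (designMat (x i) j e' • (-(sigB (lin (x i) j θ) • Fclm (x i) j)))) θ := by
  have hfun : (fun t => fderiv ℝ (pll x) t (Pi.single e' 1))
      = fun t => (n : ℝ)⁻¹ * ∑ i, ∑ j,
        (toR (x i j) - sigA (lin (x i) j t)) * designMat (x i) j e' :=
    funext fun t => fderiv_pll_single x t e'
  rw [hfun]
  refine HasFDerivAt.const_mul ?_ _
  refine HasFDerivAt.fun_sum fun i _ => HasFDerivAt.fun_sum fun j _ => ?_
  have h2 := (hasDerivAt_sigA (lin (x i) j θ)).comp_hasFDerivAt θ (hasFDerivAt_lin (x i) j θ)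
  exact (h2.const_sub (toR (x i j))).mul_const _

lemma hess_entry (x : Fin n → Fin p → Bool) (θ : PairIdx p → ℝ) (e e' : PairIdx p) :
    hessAt (pll x) θ e e'
      = (n : ℝ)⁻¹ * ∑ i, ∑ j,
        -(sigB (lin (x i) j θ)) * designMat (x i) j e' * designMat (x i) j e := by
  unfold hessAt
  rw [Matrix.of_apply, (hasFDerivAt_grad x e' θ).fderiv]
  simp only [ContinuousLinearMap.smul_apply, ContinuousLinearMap.sum_apply,
    ContinuousLinearMap.neg_apply, Fclm_single, smul_eq_mul]
  congr 1
  refine Finset.sum_congr rfl fun i _ => Finset.sum_congr rfl fun j _ => ?_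
  ring

/-! ### Rayleigh quotient bounds -/

lemma rayleigh_le_lamMax {ι : Type*} [Fintype ι] (A : Matrix ι ι ℝ) (v : ι → ℝ)
    (hv : ∑ i, v i ^ 2 = 1) : v ⬝ᵥ A.mulVec v ≤ lamMax A := by
  have hb : BddAbove (Set.range fun u : {v : ι → ℝ // ∑ i, v i ^ 2 = 1} =>
      u.1 ⬝ᵥ A.mulVec u.1) := by
    refine ⟨∑ i, ∑ j, |A i j|, ?_⟩
    rintro y ⟨u, rfl⟩
    have hu : ∀ i, |u.1 i| ≤ 1 := by
      intro i
      have h1 : u.1 i ^ 2 ≤ ∑ k, u.1 k ^ 2 :=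
        Finset.single_le_sum (fun k _ => sq_nonneg (u.1 k)) (Finset.mem_univ i)
      rw [u.2] at h1
      nlinarith [abs_nonneg (u.1 i), sq_abs (u.1 i)]
    calc u.1 ⬝ᵥ A.mulVec u.1 ≤ |u.1 ⬝ᵥ A.mulVec u.1| := le_abs_self _
      _ ≤ ∑ i, |u.1 i * (A.mulVec u.1 i)| := Finset.abs_sum_le_sum_abs _ _
      _ ≤ ∑ i, ∑ j, |A i j| := by
        refine Finset.sum_le_sum fun i _ => ?_
        calc |u.1 i * A.mulVec u.1 i| ≤ |A.mulVec u.1 i| := by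
              rw [abs_mul]
              exact mul_le_of_le_one_left (abs_nonneg _) (hu i)
          _ ≤ ∑ j, |A i j * u.1 j| := Finset.abs_sum_le_sum_abs _ _
          _ ≤ ∑ j, |A i j| := by
              refine Finset.sum_le_sum fun j _ => ?_
              rw [abs_mul]
              exact mul_le_of_le_one_right (abs_nonneg _) (hu j)
  exact le_ciSup hb ⟨v, hv⟩

lemma dot_smul_quad {ι : Type*} [Fintype ι] (A : Matrix ι ι ℝ) (v : ι → ℝ) (c : ℝ) :
    (c • v) ⬝ᵥ A.mulVec (c • v) = c ^ 2 * (v ⬝ᵥ A.mulVec v) := by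
  simp only [dotProduct, Matrix.mulVec, Pi.smul_apply, smul_eq_mul, Finset.mul_sum]
  refine Finset.sum_congr rfl fun i _ => Finset.sum_congr rfl fun j _ => ?_
  ring

lemma quad_restrict {ι : Type*} [Fintype ι] [DecidableEq ι] (A : Matrix ι ι ℝ)
    (δ : ι → ℝ) (S : Finset ι) (hsupp : ∀ e ∉ S, δ e = 0) :
    δ ⬝ᵥ A.mulVec δ = (fun i : ↥S => δ i.1) ⬝ᵥ (subm A S S).mulVec (fun i : ↥S => δ i.1) := by
  simp only [dotProduct, Matrix.mulVec, subm, Matrix.submatrix_apply]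
  calc ∑ e : ι, δ e * ∑ e' : ι, A e e' * δ e'
      = ∑ e : ι, δ e * ∑ e' ∈ S, A e e' * δ e' := by
        refine Finset.sum_congr rfl fun e _ => ?_
        congr 1
        exact (Finset.sum_subset (Finset.subset_univ S)
          (fun e' _ he' => by rw [hsupp e' he', mul_zero])).symm
    _ = ∑ e ∈ S, δ e * ∑ e' ∈ S, A e e' * δ e' :=
        (Finset.sum_subset (Finset.subset_univ S)
          (fun e _ he => by rw [hsupp e he, zero_mul])).symm
    _ = ∑ e : ↥S, δ ↑e * ∑ e' ∈ S, A (↑e) e' * δ e' :=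
        (Finset.sum_coe_sort S _).symm
    _ = ∑ e : ↥S, δ ↑e * ∑ e' : ↥S, A ↑e ↑e' * δ ↑e' := by
        refine Finset.sum_congr rfl fun e _ => ?_
        congr 1
        exact (Finset.sum_coe_sort S (fun e' => A (↑e) e' * δ e')).symm

lemma sum_sq_restrict {ι : Type*} [Fintype ι] [DecidableEq ι]
    (δ : ι → ℝ) (S : Finset ι) (hsupp : ∀ e ∉ S, δ e = 0) :
    ∑ i : ↥S, δ i.1 ^ 2 = ∑ e, δ e ^ 2 := by
  rw [Finset.sum_coe_sort S (fun e => δ e ^ 2)]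
  exact Finset.sum_subset (Finset.subset_univ S)
    (fun e _ he => by rw [hsupp e he]; ring)

lemma quad_le_of_supp {ι : Type*} [Fintype ι] [DecidableEq ι] (A : Matrix ι ι ℝ)
    (δ : ι → ℝ) (S : Finset ι) (τ : ℝ) (hτ : 0 < τ) (hsupp : ∀ e ∉ S, δ e = 0)
    (hlam : lamMax (subm A S S) ≤ τ) :
    δ ⬝ᵥ A.mulVec δ ≤ τ * ∑ e, δ e ^ 2 := by
  set s := ∑ e, δ e ^ 2 with hs
  have hs0 : 0 ≤ s := Finset.sum_nonneg fun e _ => sq_nonneg _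
  rcases eq_or_lt_of_le hs0 with h0 | hpos
  · have hz : ∀ e, δ e = 0 := by
      intro e
      have := (Finset.sum_eq_zero_iff_of_nonneg (fun e _ => sq_nonneg (δ e))).1 h0.symm
        e (Finset.mem_univ e)
      exact pow_eq_zero_iff (n := 2) (by norm_num) |>.1 this
    have hδ : δ = 0 := funext hz
    rw [hδ]
    simp only [Matrix.mulVec_zero, dotProduct_zero]
    exact mul_nonneg hτ.le hs0
  · have hquad := quad_restrict A δ S hsupp
    set v : ↥S → ℝ := fun i => δ i.1 with hv
    have hvs : ∑ i : ↥S, v i ^ 2 = s := sum_sq_restrict δ S hsupp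
    set c : ℝ := (Real.sqrt s)⁻¹ with hc
    have hc2 : c ^ 2 = s⁻¹ := by rw [hc, inv_pow, Real.sq_sqrt hs0]
    have hunit : ∑ i : ↥S, (c • v) i ^ 2 = 1 := by
      simp only [Pi.smul_apply, smul_eq_mul, mul_pow]
      rw [← Finset.mul_sum, hvs, hc2, inv_mul_cancel₀ hpos.ne']
    have hray := rayleigh_le_lamMax (subm A S S) (c • v) hunit
    rw [dot_smul_quad, hc2] at hray
    have h1 : s⁻¹ * (v ⬝ᵥ (subm A S S).mulVec v) ≤ τ := hray.trans hlam
    have hq : v ⬝ᵥ (subm A S S).mulVec v ≤ τ * s := by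
      calc v ⬝ᵥ (subm A S S).mulVec v
          = s * (s⁻¹ * (v ⬝ᵥ (subm A S S).mulVec v)) := by field_simp
        _ ≤ s * τ := mul_le_mul_of_nonneg_left h1 hs0
        _ = τ * s := mul_comm _ _
    rw [hquad]
    exact hq

/-! ### The quadratic form of `Uhat` -/

lemma dot_sum_mulVec {ι κ : Type*} [Fintype ι] [Fintype κ] (M : κ → Matrix ι ι ℝ)
    (v : ι → ℝ) : v ⬝ᵥ (∑ k, M k).mulVec v = ∑ k, v ⬝ᵥ (M k).mulVec v := by
  simp only [dotProduct, Matrix.mulVec, Matrix.sum_apply, Finset.sum_mul, Finset.mul_sum]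
  calc ∑ a : ι, ∑ b : ι, ∑ k : κ, v a * (M k a b * v b)
      = ∑ a : ι, ∑ k : κ, ∑ b : ι, v a * (M k a b * v b) :=
        Finset.sum_congr rfl fun a _ => Finset.sum_comm
    _ = ∑ k : κ, ∑ a : ι, ∑ b : ι, v a * (M k a b * v b) := Finset.sum_comm

lemma dot_gram (x : Fin p → Bool) (δ : PairIdx p → ℝ) :
    δ ⬝ᵥ ((designMat x)ᵀ * designMat x).mulVec δ = ∑ j, (lin x j δ) ^ 2 := by
  rw [← Matrix.mulVec_mulVec (v := δ) (M := (designMat x)ᵀ) (N := designMat x),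
    Matrix.dotProduct_mulVec, Matrix.vecMul_transpose]
  simp only [dotProduct, Matrix.mulVec, lin, sq]

lemma quad_eq (x : Fin n → Fin p → Bool) (δ : PairIdx p → ℝ) :
    (n : ℝ)⁻¹ * ∑ i, ∑ j, (lin (x i) j δ) ^ 2 = δ ⬝ᵥ (Uhat x).mulVec δ := by
  unfold Uhat
  rw [Matrix.smul_mulVec, dotProduct_smul, smul_eq_mul, dot_sum_mulVec]
  congr 1
  exact (Finset.sum_congr rfl fun i _ => (dot_gram (x i) δ)).symm

/-! ### The Hessian remainder entry and its bound -/

lemma mulVec_entry (x : Fin n → Fin p → Bool) (θ0 δ : PairIdx p → ℝ) (α : ℝ)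
    (e : PairIdx p) :
    ((hessAt (pll x) (θ0 + α • δ) - hessAt (pll x) θ0).mulVec δ) e
      = (n : ℝ)⁻¹ * ∑ i, ∑ j,
        (sigB (lin (x i) j θ0) - sigB (lin (x i) j (θ0 + α • δ)))
          * designMat (x i) j e * lin (x i) j δ := by
  have hdiff : ∀ e', (hessAt (pll x) (θ0 + α • δ) - hessAt (pll x) θ0) e e'
      = (n : ℝ)⁻¹ * ∑ i, ∑ j,
        ((sigB (lin (x i) j θ0) - sigB (lin (x i) j (θ0 + α • δ)))
          * designMat (x i) j e) * designMat (x i) j e' := by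
    intro e'
    rw [Matrix.sub_apply, hess_entry, hess_entry, ← mul_sub, ← Finset.sum_sub_distrib]
    congr 1
    refine Finset.sum_congr rfl fun i _ => ?_
    rw [← Finset.sum_sub_distrib]
    refine Finset.sum_congr rfl fun j _ => ?_
    ring
  show (∑ e', (hessAt (pll x) (θ0 + α • δ) - hessAt (pll x) θ0) e e' * δ e') = _
  simp only [hdiff]
  calc ∑ e', ((n : ℝ)⁻¹ * ∑ i, ∑ j,
          ((sigB (lin (x i) j θ0) - sigB (lin (x i) j (θ0 + α • δ)))
            * designMat (x i) j e) * designMat (x i) j e') * δ e'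
      = (n : ℝ)⁻¹ * ∑ e', ∑ i, ∑ j,
          (((sigB (lin (x i) j θ0) - sigB (lin (x i) j (θ0 + α • δ)))
            * designMat (x i) j e) * designMat (x i) j e') * δ e' := by
        rw [Finset.mul_sum]
        refine Finset.sum_congr rfl fun e' _ => ?_
        rw [mul_assoc]
        congr 1
        rw [Finset.sum_mul]
        exact Finset.sum_congr rfl fun i _ => Finset.sum_mul _ _ _
    _ = (n : ℝ)⁻¹ * ∑ i, ∑ j, ∑ e',
          (((sigB (lin (x i) j θ0) - sigB (lin (x i) j (θ0 + α • δ)))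
            * designMat (x i) j e) * designMat (x i) j e') * δ e' := by
        congr 1
        rw [Finset.sum_comm]
        refine Finset.sum_congr rfl fun i _ => ?_
        rw [Finset.sum_comm]
    _ = (n : ℝ)⁻¹ * ∑ i, ∑ j,
          (sigB (lin (x i) j θ0) - sigB (lin (x i) j (θ0 + α • δ)))
            * designMat (x i) j e * lin (x i) j δ := by
        congr 1
        refine Finset.sum_congr rfl fun i _ => Finset.sum_congr rfl fun j _ => ?_
        unfold lin
        rw [Finset.mul_sum]
        refine Finset.sum_congr rfl fun e' _ => ?_
        ring

lemma entry_abs_le (x : Fin n → Fin p → Bool) (θ0 δ : PairIdx p → ℝ) (α : ℝ)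
    (hα : α ∈ Set.Icc (0:ℝ) 1) (e : PairIdx p) :
    |((hessAt (pll x) (θ0 + α • δ) - hessAt (pll x) θ0).mulVec δ) e|
      ≤ (n : ℝ)⁻¹ * ∑ i, ∑ j, (lin (x i) j δ) ^ 2 := by
  rw [mulVec_entry]
  rw [abs_mul, abs_of_nonneg (by positivity : (0:ℝ) ≤ (n : ℝ)⁻¹)]
  refine mul_le_mul_of_nonneg_left ?_ (by positivity)
  refine (Finset.abs_sum_le_sum_abs _ _).trans ?_
  refine Finset.sum_le_sum fun i _ => (Finset.abs_sum_le_sum_abs _ _).trans ?_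
  refine Finset.sum_le_sum fun j _ => ?_
  have hw : lin (x i) j (θ0 + α • δ) = lin (x i) j θ0 + α * lin (x i) j δ :=
    lin_add_smul (x i) j θ0 δ α
  have hc : |sigB (lin (x i) j θ0) - sigB (lin (x i) j (θ0 + α • δ))| ≤ |lin (x i) j δ| := by
    calc |sigB (lin (x i) j θ0) - sigB (lin (x i) j (θ0 + α • δ))|
        ≤ |lin (x i) j θ0 - lin (x i) j (θ0 + α • δ)| := sigB_lip _ _
      _ = |α| * |lin (x i) j δ| := by
          rw [hw]
          have hx : lin (x i) j θ0 - (lin (x i) j θ0 + α * lin (x i) j δ)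
              = -(α * lin (x i) j δ) := by ring
          rw [hx, abs_neg, abs_mul]
      _ ≤ 1 * |lin (x i) j δ| := by
          refine mul_le_mul_of_nonneg_right ?_ (abs_nonneg _)
          rw [abs_of_nonneg hα.1]
          exact hα.2
      _ = |lin (x i) j δ| := one_mul _
  calc |(sigB (lin (x i) j θ0) - sigB (lin (x i) j (θ0 + α • δ)))
          * designMat (x i) j e * lin (x i) j δ|
      = |sigB (lin (x i) j θ0) - sigB (lin (x i) j (θ0 + α • δ))|
          * |designMat (x i) j e| * |lin (x i) j δ| := by rw [abs_mul, abs_mul]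
    _ ≤ |lin (x i) j δ| * 1 * |lin (x i) j δ| := by
        refine mul_le_mul ?_ le_rfl (abs_nonneg _) (by positivity)
        exact mul_le_mul hc (designMat_abs_le (x i) j e) (abs_nonneg _) (abs_nonneg _)
    _ = (lin (x i) j δ) ^ 2 := by rw [mul_one, abs_mul_abs_self, sq]

/-! ### Main deterministic bound -/

lemma key_bound (x : Fin n → Fin p → Bool) (θ0 δ : PairIdx p → ℝ) (α τ : ℝ)
    (hτ : 0 < τ) (hα : α ∈ Set.Icc (0:ℝ) 1) (S : Finset (PairIdx p))
    (hsupp : ∀ e ∉ S, δ e = 0) (hlam : lamMax (subm (Uhat x) S S) ≤ τ) :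
    supNorm ((hessAt (pll x) (θ0 + α • δ) - hessAt (pll x) θ0).mulVec δ)
      ≤ τ * euclNorm δ ^ 2 := by
  classical
  have hrhs : euclNorm δ ^ 2 = ∑ e, δ e ^ 2 :=
    Real.sq_sqrt (Finset.sum_nonneg fun e _ => sq_nonneg _)
  have hquad := quad_le_of_supp (Uhat x) δ S τ hτ hsupp hlam
  refine Real.iSup_le (fun e => ?_) ?_
  · calc |((hessAt (pll x) (θ0 + α • δ) - hessAt (pll x) θ0).mulVec δ) e|
        ≤ (n : ℝ)⁻¹ * ∑ i, ∑ j, (lin (x i) j δ) ^ 2 := entry_abs_le x θ0 δ α hα e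
      _ = δ ⬝ᵥ (Uhat x).mulVec δ := quad_eq x δ
      _ ≤ τ * ∑ e, δ e ^ 2 := hquad
      _ = τ * euclNorm δ ^ 2 := by rw [hrhs]
  · rw [hrhs]
    exact mul_nonneg hτ.le (Finset.sum_nonneg fun e _ => sq_nonneg _)

/-! ### The probability is one -/

lemma sum_isingPmf (θ : PairIdx p → ℝ) : ∑ x : Fin p → Bool, isingPmf θ x = 1 := by
  unfold isingPmf
  rw [← Finset.sum_div, div_self]
  exact (Finset.sum_pos (fun y _ => Real.exp_pos _) Finset.univ_nonempty).ne'

lemma sum_prodW {K : ℕ} (nk : Fin K → ℕ) (θb : Fin K → PairIdx p → ℝ) :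
    ∑ xs : ∀ k, Fin (nk k) → Fin p → Bool, prodW nk θb xs = 1 := by
  unfold prodW
  have h := Fintype.prod_sum (ι := Fin K) (κ := fun k => Fin (nk k) → Fin p → Bool)
    (f := fun k g => ∏ i, isingPmf (θb k) (g i))
  rw [← h]
  refine Finset.prod_eq_one fun k _ => ?_
  have h2 := Fintype.prod_sum (ι := Fin (nk k)) (κ := fun _ => Fin p → Bool)
    (f := fun _ b => isingPmf (θb k) b)
  rw [← h2]
  exact Finset.prod_eq_one fun i _ => sum_isingPmf (θb k)

end LemA3
end LemmaA3Aux

/-- Lemma A.3 (Hessian Lipschitz-type remainder bound): under the sample condition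
`Λ_max(Û^{(k)}_{S_k,S_k}) ≤ τ_max` (an antecedent inside the event since it depends
on the data), with probability tending to one, for every `α_k ∈ [0,1]` and every
perturbation supported on `S_k`,
`‖[∇² l_k(θ̄ + α δ) − ∇² l_k(θ̄)] δ‖_∞ ≤ τ_max ‖δ‖₂²`. -/
theorem stmt_12 (K : ℕ) (hK : 1 ≤ K)
    (p : ℕ → ℕ) (hp : ∀ n, 1 ≤ p n)
    (nk : ℕ → Fin K → ℕ) (hn : ∀ n, ∑ k, nk n k = n)
    (θbar : ∀ n : ℕ, Fin K → PairIdx (p n) → ℝ)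
    (τmax : ℝ) (hτmax : 0 < τmax) :
    Filter.Tendsto
      (fun n : ℕ =>
        finProb (prodW (nk n) (θbar n))
          {xs |
            (∀ k, lamMax (subm (Uhat (xs k)) (suppF (θbar n k)) (suppF (θbar n k))) ≤ τmax) →
            ∀ (k : Fin K) (α : ℝ) (δ : PairIdx (p n) → ℝ),
              α ∈ Set.Icc (0 : ℝ) 1 →
              (∀ e, e ∉ suppF (θbar n k) → δ e = 0) →
              supNorm
                  ((hessAt (pll (xs k)) (θbar n k + α • δ)
                    - hessAt (pll (xs k)) (θbar n k)).mulVec δ)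
                ≤ τmax * euclNorm δ ^ 2})
      Filter.atTop (nhds 1) := by
  have hconst : ∀ n : ℕ,
      finProb (prodW (nk n) (θbar n))
          {xs |
            (∀ k, lamMax (subm (Uhat (xs k)) (suppF (θbar n k)) (suppF (θbar n k))) ≤ τmax) →
            ∀ (k : Fin K) (α : ℝ) (δ : PairIdx (p n) → ℝ),
              α ∈ Set.Icc (0 : ℝ) 1 →
              (∀ e, e ∉ suppF (θbar n k) → δ e = 0) →
              supNorm
                  ((hessAt (pll (xs k)) (θbar n k + α • δ)
                    - hessAt (pll (xs k)) (θbar n k)).mulVec δ)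
                ≤ τmax * euclNorm δ ^ 2} = 1 := by
    intro n
    have hset : {xs : ∀ k, Fin (nk n k) → Fin (p n) → Bool |
        (∀ k, lamMax (subm (Uhat (xs k)) (suppF (θbar n k)) (suppF (θbar n k))) ≤ τmax) →
        ∀ (k : Fin K) (α : ℝ) (δ : PairIdx (p n) → ℝ),
          α ∈ Set.Icc (0 : ℝ) 1 →
          (∀ e, e ∉ suppF (θbar n k) → δ e = 0) →
          supNorm
              ((hessAt (pll (xs k)) (θbar n k + α • δ)
                - hessAt (pll (xs k)) (θbar n k)).mulVec δ)
            ≤ τmax * euclNorm δ ^ 2} = Set.univ := by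
      refine Set.eq_univ_of_forall fun xs => ?_
      intro hcond k α δ hα hsupp
      exact LemA3.key_bound (xs k) (θbar n k) δ α τmax hτmax hα
        (suppF (θbar n k)) hsupp (hcond k)
    rw [hset]
    unfold finProb
    simp only [Set.indicator_univ]
    exact LemA3.sum_prodW (nk n) (θbar n)
  have hfun : (fun n : ℕ =>
      finProb (prodW (nk n) (θbar n))
          {xs |
            (∀ k, lamMax (subm (Uhat (xs k)) (suppF (θbar n k)) (suppF (θbar n k))) ≤ τmax) →
            ∀ (k : Fin K) (α : ℝ) (δ : PairIdx (p n) → ℝ),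
              α ∈ Set.Icc (0 : ℝ) 1 →
              (∀ e, e ∉ suppF (θbar n k) → δ e = 0) →
              supNorm
                  ((hessAt (pll (xs k)) (θbar n k + α • δ)
                    - hessAt (pll (xs k)) (θbar n k)).mulVec δ)
                ≤ τmax * euclNorm δ ^ 2}) = fun _ => (1 : ℝ) :=
    funext hconst
  rw [hfun]
  exact tendsto_const_nhds
end
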